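/- arXiv:1206.6356 — 8 statements merged into one kernel-verified Lean document; each statement's English description precedes it below -/
import Mathlib

section
/- A nonzero signal x on a connected graph satisfies Δ_{g,u0}²(x) = 0 if and only if x is a scalar multiple of the impulse δ_{u0}; moreover in that case Δ_s²(x) = 1. Hence (1,0) is the unique point of the feasibility region on the horizontal axis. -/
open Matrix BigOperators Finset

/-- The normalized Laplacian `L = I - D^{-1/2} A D^{-1/2}` of a simple graph. -/
noncomputable def normLap {V : Type*} [Fintype V] [DecidableEq V]
    (G : SimpleGraph V) [DecidableRel G.Adj] : Matrix V V ℝ :=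
  fun i j => (if i = j then (1 : ℝ) else 0) -
    (if G.Adj i j then 1 / (Real.sqrt (G.degree i) * Real.sqrt (G.degree j)) else 0)

/-- A nonzero signal `x` on a connected graph (with at least 2 vertices) has zero graph
spread iff it is a scalar multiple of the impulse `δ_{u0}`; in that case its spectral
spread equals `1`. Hence `(1,0)` is the unique point of the feasibility region on the
horizontal axis. -/
theorem stmt4 {V : Type*} [Fintype V] [DecidableEq V]
    (hcard : 2 ≤ Fintype.card V)
    (G : SimpleGraph V) [DecidableRel G.Adj] (hconn : G.Connected)
    (d : V → V → ℝ)
    (hd_nonneg : ∀ u v, 0 ≤ d u v)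
    (hd_eq_zero : ∀ u v, d u v = 0 ↔ u = v)
    (hd_symm : ∀ u v, d u v = d v u)
    (u0 : V) :
    let Δs : (V → ℝ) → ℝ := fun x => (x ⬝ᵥ (normLap G *ᵥ x)) / (∑ v : V, (x v) ^ 2)
    let Δg : (V → ℝ) → ℝ := fun x =>
      (∑ v : V, (d u0 v) ^ 2 * (x v) ^ 2) / (∑ v : V, (x v) ^ 2)
    let δ : V → ℝ := fun v => if v = u0 then 1 else 0
    (∀ x : V → ℝ, x ≠ 0 →
      ((Δg x = 0 ↔ ∃ c : ℝ, x = c • δ) ∧ (Δg x = 0 → Δs x = 1))) ∧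
    (∀ p : ℝ × ℝ, (∃ x : V → ℝ, x ≠ 0 ∧ p.1 = Δs x ∧ p.2 = Δg x) → p.2 = 0 →
      p = (1, 0)) := by
  intro Δs Δg δ
  have key : ∀ x : V → ℝ, x ≠ 0 →
      ((Δg x = 0 ↔ ∃ c : ℝ, x = c • δ) ∧ (Δg x = 0 → Δs x = 1)) := by
    intro x hx
    have hex : ∃ v, x v ≠ 0 := by
      by_contra h; push_neg at h; exact hx (funext h)
    have hden : 0 < ∑ v : V, (x v) ^ 2 := by
      obtain ⟨v, hv⟩ := hex
      exact Finset.sum_pos' (fun i _ => sq_nonneg _)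
        ⟨v, Finset.mem_univ v, by positivity⟩
    -- characterize Δg x = 0
    have hΔg : Δg x = 0 ↔ ∀ v, v ≠ u0 → x v = 0 := by
      constructor
      · intro h v hv
        have hnum : ∑ v : V, (d u0 v) ^ 2 * (x v) ^ 2 = 0 := by
          simp only [Δg, div_eq_zero_iff] at h
          rcases h with h0 | h0
          · exact h0
          · exact absurd h0 (ne_of_gt hden)
        have hterm : (d u0 v) ^ 2 * (x v) ^ 2 = 0 :=
          (Finset.sum_eq_zero_iff_of_nonneg (fun i _ => by positivity)).mp hnum v
            (Finset.mem_univ v)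
        have hdv : d u0 v ≠ 0 := fun h0 => hv ((hd_eq_zero u0 v).mp h0).symm
        rcases mul_eq_zero.mp hterm with h0 | h0
        · exact absurd (sq_eq_zero_iff.mp h0) hdv
        · exact sq_eq_zero_iff.mp h0
      · intro h
        have hz : ∑ v : V, (d u0 v) ^ 2 * (x v) ^ 2 = 0 := by
          apply Finset.sum_eq_zero
          intro v _
          by_cases hv : v = u0
          · have hd0 : d u0 u0 = 0 := (hd_eq_zero u0 u0).mpr rfl
            simp [hv, hd0]
          · simp [h v hv]
        simp [Δg, hz]
    have hiff : Δg x = 0 ↔ ∃ c : ℝ, x = c • δ := by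
      rw [hΔg]
      constructor
      · intro h
        refine ⟨x u0, funext fun v => ?_⟩
        by_cases hv : v = u0
        · subst hv; simp [δ]
        · simp [δ, hv, h v hv]
      · rintro ⟨c, rfl⟩ v hv
        simp [δ, hv]
    refine ⟨hiff, fun h => ?_⟩
    have h' := hΔg.mp h
    -- x is supported on u0
    have hx0 : x u0 ≠ 0 := by
      obtain ⟨v, hv⟩ := hex
      by_cases hvu : v = u0
      · exact hvu ▸ hv
      · exact absurd (h' v hvu) hv
    have hdot : x ⬝ᵥ (normLap G *ᵥ x) = (x u0) ^ 2 := by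
      unfold dotProduct mulVec dotProduct
      rw [Finset.sum_eq_single u0]
      · rw [Finset.sum_eq_single u0]
        · have : ¬ G.Adj u0 u0 := G.irrefl
          simp [normLap, this]; ring
        · intro b _ hb; simp [h' b hb]
        · intro hb; exact absurd (Finset.mem_univ u0) hb
      · intro b _ hb; simp [h' b hb]
      · intro hb; exact absurd (Finset.mem_univ u0) hb
    have hsum : ∑ v : V, (x v) ^ 2 = (x u0) ^ 2 := by
      rw [Finset.sum_eq_single u0]
      · intro b _ hb; simp [h' b hb]
      · intro hb; exact absurd (Finset.mem_univ u0) hb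
    show (x ⬝ᵥ (normLap G *ᵥ x)) / (∑ v : V, (x v) ^ 2) = 1
    rw [hdot, hsum, div_self (by positivity)]
  refine ⟨key, ?_⟩
  rintro ⟨a, b⟩ ⟨x, hx, ha, hb⟩ hb0
  obtain ⟨_, h2⟩ := key x hx
  simp only at hb0 ha hb
  subst hb
  have := h2 hb0
  simp [Prod.ext_iff, ha, this, hb0]
end

section
/- (Convexity of the feasibility region) Let N ≥ 3 and suppose x1, x2 ∈ ℝ^N are unit vectors with x_i^T L x_i = s_i and x_i^T P² x_i = g_i for symmetric positive semidefinite matrices L and P². Then for every β ∈ [0,1] there exists a unit vector x with x^T L x = β s1 + (1-β) s2 and x^T P² x = β g1 + (1-β) g2. -/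
open Matrix BigOperators Finset

section BrickmanAux
variable {N : ℕ}

lemma dot_sq (u : Fin N → ℝ) : u ⬝ᵥ u = ∑ i, u i ^ 2 := by
  simp [dotProduct, sq]

lemma dot_self_nonneg' (u : Fin N → ℝ) : 0 ≤ u ⬝ᵥ u :=
  Finset.sum_nonneg fun i _ => mul_self_nonneg _

lemma bil_left (M : Matrix (Fin N) (Fin N) ℝ) (u v w : Fin N → ℝ) (a c : ℝ) :
    u ⬝ᵥ (M *ᵥ (a • v + c • w)) = a * (u ⬝ᵥ (M *ᵥ v)) + c * (u ⬝ᵥ (M *ᵥ w)) := by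
  simp [Matrix.mulVec_add, Matrix.mulVec_smul, dotProduct_add, dotProduct_smul, smul_eq_mul]

lemma bil_right (M : Matrix (Fin N) (Fin N) ℝ) (u v w : Fin N → ℝ) (a c : ℝ) :
    (a • v + c • w) ⬝ᵥ (M *ᵥ u) = a * (v ⬝ᵥ (M *ᵥ u)) + c * (w ⬝ᵥ (M *ᵥ u)) := by
  simp [add_dotProduct, smul_dotProduct, smul_eq_mul]

lemma bil_comb (M : Matrix (Fin N) (Fin N) ℝ) (u v : Fin N → ℝ) (a c : ℝ) :
    (a • u + c • v) ⬝ᵥ (M *ᵥ (a • u + c • v)) =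
      a^2 * (u ⬝ᵥ (M *ᵥ u)) + a*c*(u ⬝ᵥ (M *ᵥ v)) + a*c*(v ⬝ᵥ (M *ᵥ u))
        + c^2 * (v ⬝ᵥ (M *ᵥ v)) := by
  rw [bil_left, bil_right, bil_right]; ring

lemma dot_lin (u v w : Fin N → ℝ) (a c : ℝ) :
    u ⬝ᵥ (a • v + c • w) = a * (u ⬝ᵥ v) + c * (u ⬝ᵥ w) := by
  simp [dotProduct_add, dotProduct_smul, smul_eq_mul]

lemma dot_comb (u v : Fin N → ℝ) (a c : ℝ) :
    (a • u + c • v) ⬝ᵥ (a • u + c • v) =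
      a^2 * (u ⬝ᵥ u) + 2*a*c*(u ⬝ᵥ v) + c^2 * (v ⬝ᵥ v) := by
  simp [add_dotProduct, smul_dotProduct, dotProduct_add, dotProduct_smul, smul_eq_mul,
    dotProduct_comm v u]
  ring

lemma smul_form (M : Matrix (Fin N) (Fin N) ℝ) (u : Fin N → ℝ) (a : ℝ) :
    (a • u) ⬝ᵥ (M *ᵥ (a • u)) = a^2 * (u ⬝ᵥ (M *ᵥ u)) := by
  simp [Matrix.mulVec_smul, dotProduct_smul, smul_dotProduct, smul_eq_mul]; ring

lemma smul_dot (u : Fin N → ℝ) (a : ℝ) :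
    (a • u) ⬝ᵥ (a • u) = a^2 * (u ⬝ᵥ u) := by
  simp [dotProduct_smul, smul_dotProduct, smul_eq_mul]; ring

lemma sym_dot {M : Matrix (Fin N) (Fin N) ℝ} (h : Mᵀ = M) (u v : Fin N → ℝ) :
    u ⬝ᵥ (M *ᵥ v) = v ⬝ᵥ (M *ᵥ u) := by
  rw [Matrix.dotProduct_mulVec, ← h, Matrix.vecMul_transpose, dotProduct_comm, h]

lemma cont_form (M : Matrix (Fin N) (Fin N) ℝ) {v : ℝ → Fin N → ℝ} (hv : Continuous v) :
    Continuous fun t => v t ⬝ᵥ (M *ᵥ v t) := by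
  have hMv : Continuous fun t => M *ᵥ v t := by
    refine continuous_pi fun i => ?_
    simp only [Matrix.mulVec, dotProduct]
    exact continuous_finset_sum _ fun j _ => continuous_const.mul ((continuous_apply j).comp hv)
  simp only [dotProduct]
  exact continuous_finset_sum _ fun i _ =>
    ((continuous_apply i).comp hv).mul ((continuous_apply i).comp hMv)

lemma cont_dot {v : ℝ → Fin N → ℝ} (hv : Continuous v) :
    Continuous fun t => v t ⬝ᵥ v t := by
  simp only [dotProduct]
  exact continuous_finset_sum _ fun i _ =>
    ((continuous_apply i).comp hv).mul ((continuous_apply i).comp hv)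

lemma convex_mem_uIcc {a b β : ℝ} (h0 : 0 ≤ β) (h1 : β ≤ 1) :
    β * a + (1 - β) * b ∈ Set.uIcc a b := by
  rcases le_total a b with h | h
  · rw [Set.uIcc_of_le h]
    constructor <;> nlinarith
  · rw [Set.uIcc_of_ge h]
    constructor <;> nlinarith

lemma solve2 {m1 m2 S G ys yg : ℝ} (hdet : m1^2 + m2^2 ≠ 0)
    (e1 : -m2*S + m1*G = -m2*ys + m1*yg) (e2 : m1*S + m2*G = m1*ys + m2*yg) :
    S = ys ∧ G = yg := by
  constructor
  · have h : (m1^2 + m2^2) * S = (m1^2 + m2^2) * ys := by linear_combination m1 * e2 - m2 * e1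
    exact mul_left_cancel₀ hdet h
  · have h : (m1^2 + m2^2) * G = (m1^2 + m2^2) * yg := by linear_combination m2 * e2 + m1 * e1
    exact mul_left_cancel₀ hdet h

/-- Core IVT lemma: a continuous nonvanishing path `v` along which the `A`-form is
`c` times the squared norm produces, after normalization, a unit vector with
`A`-value `c` and any prescribed `B`-value between the endpoint values. -/
lemma brickman_core (A B : Matrix (Fin N) (Fin N) ℝ) (v : ℝ → Fin N → ℝ)
    (hv : Continuous v) (hs : ∀ t ∈ Set.Icc (0:ℝ) 1, v t ⬝ᵥ v t ≠ 0)
    (c : ℝ) (hq : ∀ t ∈ Set.Icc (0:ℝ) 1, v t ⬝ᵥ (A *ᵥ v t) = c * (v t ⬝ᵥ v t))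
    (y ya yb : ℝ)
    (h0 : v 0 ⬝ᵥ (B *ᵥ v 0) = ya * (v 0 ⬝ᵥ v 0))
    (h1 : v 1 ⬝ᵥ (B *ᵥ v 1) = yb * (v 1 ⬝ᵥ v 1))
    (hy : y ∈ Set.uIcc ya yb) :
    ∃ x : Fin N → ℝ, (∑ i, x i ^ 2 = 1) ∧ x ⬝ᵥ (A *ᵥ x) = c ∧ x ⬝ᵥ (B *ᵥ x) = y := by
  set h : ℝ → ℝ := fun t => (v t ⬝ᵥ (B *ᵥ v t)) / (v t ⬝ᵥ v t) with hh
  have hcont : ContinuousOn h (Set.uIcc (0:ℝ) 1) := by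
    rw [Set.uIcc_of_le (zero_le_one)]
    exact ContinuousOn.div (cont_form B hv).continuousOn (cont_dot hv).continuousOn hs
  have h0' : h 0 = ya := by
    have := hs 0 (by constructor <;> norm_num)
    rw [hh]; simp only; rw [h0]; field_simp
  have h1' : h 1 = yb := by
    have := hs 1 (by constructor <;> norm_num)
    rw [hh]; simp only; rw [h1]; field_simp
  have hmem : y ∈ h '' Set.uIcc (0:ℝ) 1 := by
    apply intermediate_value_uIcc hcont
    rw [h0', h1']; exact hy
  obtain ⟨t₀, ht₀, hyt⟩ := hmem
  rw [Set.uIcc_of_le zero_le_one] at ht₀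
  have hσne := hs t₀ ht₀
  have hσpos : 0 < v t₀ ⬝ᵥ v t₀ := lt_of_le_of_ne (dot_self_nonneg' _) (Ne.symm hσne)
  set σ := v t₀ ⬝ᵥ v t₀ with hσ
  refine ⟨(Real.sqrt σ)⁻¹ • v t₀, ?_, ?_, ?_⟩
  · rw [← dot_sq, smul_dot, ← hσ, inv_pow, Real.sq_sqrt hσpos.le]
    field_simp
  · rw [smul_form, inv_pow, Real.sq_sqrt hσpos.le, hq t₀ ht₀, ← hσ]
    field_simp
  · rw [smul_form, inv_pow, Real.sq_sqrt hσpos.le]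
    have : v t₀ ⬝ᵥ (B *ᵥ v t₀) = y * σ := by
      rw [← hyt, hh]; field_simp
      rw [← hσ]; exact (mul_div_cancel_right₀ _ hσne).symm
    rw [this]; field_simp

lemma exists_common_kernel {N : ℕ} (hN : 3 ≤ N) (f1 f2 : (Fin N → ℝ) →ₗ[ℝ] ℝ) :
    ∃ w : Fin N → ℝ, w ≠ 0 ∧ f1 w = 0 ∧ f2 w = 0 := by
  set T := f1.prod f2 with hT
  by_cases hk : LinearMap.ker T = ⊥
  · have hinj : Function.Injective T := LinearMap.ker_eq_bot.mp hk
    have h1 := LinearMap.finrank_le_finrank_of_injective hinj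
    rw [Module.finrank_fintype_fun_eq_card] at h1
    simp [Module.finrank_prod] at h1
    omega
  · obtain ⟨w, hw, hw0⟩ := Submodule.exists_mem_ne_zero_of_ne_bot hk
    refine ⟨w, hw0, ?_, ?_⟩
    · exact congrArg Prod.fst (LinearMap.mem_ker.mp hw)
    · exact congrArg Prod.snd (LinearMap.mem_ker.mp hw)

end BrickmanAux

/-- Convexity of the feasibility region: if `N ≥ 3` and two unit vectors achieve
spread pairs `(s₁,g₁)` and `(s₂,g₂)` with respect to positive semidefinite matrices
`L` and `P²`, then every convex combination `(βs₁+(1-β)s₂, βg₁+(1-β)g₂)` is achieved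
by some unit vector. -/
theorem stmt6 {N : ℕ} (hN : 3 ≤ N)
    (L P2 : Matrix (Fin N) (Fin N) ℝ)
    (hL : L.PosSemidef) (hP2 : P2.PosSemidef)
    (x1 x2 : Fin N → ℝ)
    (hx1 : ∑ i, (x1 i) ^ 2 = 1) (hx2 : ∑ i, (x2 i) ^ 2 = 1)
    (s1 s2 g1 g2 : ℝ)
    (hs1 : x1 ⬝ᵥ (L *ᵥ x1) = s1) (hs2 : x2 ⬝ᵥ (L *ᵥ x2) = s2)
    (hg1 : x1 ⬝ᵥ (P2 *ᵥ x1) = g1) (hg2 : x2 ⬝ᵥ (P2 *ᵥ x2) = g2)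
    (β : ℝ) (hβ : β ∈ Set.Icc (0 : ℝ) 1) :
    ∃ x : Fin N → ℝ, ∑ i, (x i) ^ 2 = 1 ∧
      x ⬝ᵥ (L *ᵥ x) = β * s1 + (1 - β) * s2 ∧
      x ⬝ᵥ (P2 *ᵥ x) = β * g1 + (1 - β) * g2 := by
  obtain ⟨hβ0, hβ1⟩ := hβ
  by_cases hpp : s1 = s2 ∧ g1 = g2
  · exact ⟨x1, hx1, by rw [hs1, hpp.1]; ring, by rw [hg1, hpp.2]; ring⟩
  -- nondegenerate case
  set m1 : ℝ := s2 - s1 with hm1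
  set m2 : ℝ := g2 - g1 with hm2
  have hdet : m1^2 + m2^2 ≠ 0 := by
    intro h
    have h1 : m1 = 0 := by nlinarith [sq_nonneg m1, sq_nonneg m2]
    have h2 : m2 = 0 := by nlinarith [sq_nonneg m1, sq_nonneg m2]
    exact hpp ⟨by rw [hm1] at h1; linarith, by rw [hm2] at h2; linarith⟩
  set c : ℝ := -m2*s1 + m1*g1 with hc
  set A : Matrix (Fin N) (Fin N) ℝ := (-m2) • L + m1 • P2 with hA
  set Bm : Matrix (Fin N) (Fin N) ℝ := m1 • L + m2 • P2 with hBm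
  set M : Matrix (Fin N) (Fin N) ℝ := A - c • (1 : Matrix (Fin N) (Fin N) ℝ) with hM
  have hsymL : Lᵀ = L := by simpa [Matrix.IsHermitian, Matrix.conjTranspose_eq_transpose_of_trivial] using hL.1
  have hsymP : P2ᵀ = P2 := by simpa [Matrix.IsHermitian, Matrix.conjTranspose_eq_transpose_of_trivial] using hP2.1
  have hsymM : Mᵀ = M := by
    rw [hM, hA, Matrix.transpose_sub, Matrix.transpose_add, Matrix.transpose_smul,
      Matrix.transpose_smul, Matrix.transpose_smul, Matrix.transpose_one, hsymL, hsymP]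
  have hd1 : x1 ⬝ᵥ x1 = 1 := by rw [dot_sq, hx1]
  have hd2 : x2 ⬝ᵥ x2 = 1 := by rw [dot_sq, hx2]
  have hAval : ∀ w : Fin N → ℝ,
      w ⬝ᵥ (A *ᵥ w) = -m2 * (w ⬝ᵥ (L *ᵥ w)) + m1 * (w ⬝ᵥ (P2 *ᵥ w)) := by
    intro w
    rw [hA, Matrix.add_mulVec, Matrix.smul_mulVec, Matrix.smul_mulVec,
      dotProduct_add, dotProduct_smul, dotProduct_smul, smul_eq_mul, smul_eq_mul]
  have hBval : ∀ w : Fin N → ℝ,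
      w ⬝ᵥ (Bm *ᵥ w) = m1 * (w ⬝ᵥ (L *ᵥ w)) + m2 * (w ⬝ᵥ (P2 *ᵥ w)) := by
    intro w
    rw [hBm, Matrix.add_mulVec, Matrix.smul_mulVec, Matrix.smul_mulVec,
      dotProduct_add, dotProduct_smul, dotProduct_smul, smul_eq_mul, smul_eq_mul]
  have hMval : ∀ w : Fin N → ℝ,
      w ⬝ᵥ (M *ᵥ w) = w ⬝ᵥ (A *ᵥ w) - c * (w ⬝ᵥ w) := by
    intro w
    rw [hM, Matrix.sub_mulVec, Matrix.smul_mulVec, Matrix.one_mulVec,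
      dotProduct_sub, dotProduct_smul, smul_eq_mul]
  have hM11 : x1 ⬝ᵥ (M *ᵥ x1) = 0 := by
    rw [hMval, hAval, hs1, hg1, hd1, hc]; ring
  have hM22 : x2 ⬝ᵥ (M *ᵥ x2) = 0 := by
    rw [hMval, hAval, hs2, hg2, hd2, hc, hm1, hm2]; ring
  set b : ℝ := x1 ⬝ᵥ (M *ᵥ x2) with hbdef
  have hb21 : x2 ⬝ᵥ (M *ᵥ x1) = b := (sym_dot hsymM x1 x2).symm
  set ys : ℝ := β*s1 + (1-β)*s2 with hys
  set yg : ℝ := β*g1 + (1-β)*g2 with hyg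
  set yB : ℝ := m1*ys + m2*yg with hyB
  have hc2 : c = -m2*ys + m1*yg := by rw [hc, hys, hyg, hm1, hm2]; ring
  -- shared final step
  have finish : ∀ x : Fin N → ℝ, (∑ i, x i ^ 2 = 1) → x ⬝ᵥ (A *ᵥ x) = c →
      x ⬝ᵥ (Bm *ᵥ x) = yB →
      (∑ i, x i ^ 2 = 1) ∧ x ⬝ᵥ (L *ᵥ x) = ys ∧ x ⬝ᵥ (P2 *ᵥ x) = yg := by
    intro x hu hqa hqb
    rw [hAval, hc2] at hqa
    rw [hBval, hyB] at hqb
    exact ⟨hu, (solve2 hdet hqa hqb).1, (solve2 hdet hqa hqb).2⟩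
  have hzero_of_dot : ∀ u : Fin N → ℝ, u ⬝ᵥ u = 0 → u = 0 := by
    intro u hu; exact dotProduct_self_eq_zero.mp hu

  by_cases hb0 : b = 0
  · -- direct arc from x1 to x2
    set v : ℝ → Fin N → ℝ := fun t => (1-t) • x1 + t • x2 with hv
    have hvc : Continuous v := by
      rw [hv]
      exact ((continuous_const.sub continuous_id).smul continuous_const).add
        (continuous_id.smul continuous_const)
    have hMvv : ∀ t : ℝ, v t ⬝ᵥ (M *ᵥ v t) = 0 := by
      intro t
      rw [hv]
      simp only
      rw [bil_comb, hM11, hM22, ← hbdef, hb21, hb0]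
      ring
    have hq : ∀ t ∈ Set.Icc (0:ℝ) 1, v t ⬝ᵥ (A *ᵥ v t) = c * (v t ⬝ᵥ v t) := by
      intro t _
      have h := hMvv t
      rw [hMval] at h
      linarith
    have hs : ∀ t ∈ Set.Icc (0:ℝ) 1, v t ⬝ᵥ v t ≠ 0 := by
      intro t _ h0
      have hv0 : v t = 0 := hzero_of_dot _ h0
      have e1 : (1-t) * (x1 ⬝ᵥ x1) + t * (x1 ⬝ᵥ x2) = 0 := by
        rw [← dot_lin x1 x1 x2 (1-t) t, show (1-t) • x1 + t • x2 = v t from rfl, hv0,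
          dotProduct_zero]
      have e2 : (1-t) * (x2 ⬝ᵥ x1) + t * (x2 ⬝ᵥ x2) = 0 := by
        rw [← dot_lin x2 x1 x2 (1-t) t, show (1-t) • x1 + t • x2 = v t from rfl, hv0,
          dotProduct_zero]
      rw [hd1] at e1
      rw [hd2, dotProduct_comm x2 x1] at e2
      have hdm1 : x1 ⬝ᵥ x2 = -1 := by linear_combination e1 + e2
      have ht2 : t = 1/2 := by linear_combination (-1/2) * e1 + (t/2) * hdm1
      have hx2x1 : x2 = (-1 : ℝ) • x1 := by
        funext i
        have h3 := congrFun hv0 i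
        simp only [hv, Pi.add_apply, Pi.smul_apply, smul_eq_mul, Pi.zero_apply, ht2] at h3
        simp only [Pi.smul_apply, smul_eq_mul]
        linarith
      apply hpp
      constructor
      · rw [← hs1, ← hs2, hx2x1, smul_form]; ring
      · rw [← hg1, ← hg2, hx2x1, smul_form]; ring
    have hv0eq : v 0 = x1 := by rw [hv]; simp
    have hv1eq : v 1 = x2 := by rw [hv]; simp
    have h0 : v 0 ⬝ᵥ (Bm *ᵥ v 0) = (m1*s1 + m2*g1) * (v 0 ⬝ᵥ v 0) := by
      rw [hv0eq, hBval, hs1, hg1, hd1]; ring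
    have h1 : v 1 ⬝ᵥ (Bm *ᵥ v 1) = (m1*s2 + m2*g2) * (v 1 ⬝ᵥ v 1) := by
      rw [hv1eq, hBval, hs2, hg2, hd2]; ring
    have hy : yB ∈ Set.uIcc (m1*s1 + m2*g1) (m1*s2 + m2*g2) := by
      have hcomb : yB = β*(m1*s1 + m2*g1) + (1-β)*(m1*s2 + m2*g2) := by
        rw [hyB, hys, hyg]; ring
      rw [hcomb]
      exact convex_mem_uIcc hβ0 hβ1
    obtain ⟨x, hxu, hxa, hxb⟩ := brickman_core A Bm v hvc hs c hq yB _ _ h0 h1 hy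
    exact ⟨x, finish x hxu hxa hxb⟩
  · -- b ≠ 0
    by_cases hex : ∃ u : Fin N → ℝ, x1 ⬝ᵥ (M *ᵥ u) = 0 ∧ u ⬝ᵥ (M *ᵥ u) ≠ 0
    · -- conic parametrization case
      obtain ⟨us, hfu, hru⟩ := hex
      set R : ℝ := us ⬝ᵥ (M *ᵥ us) with hR
      set b2 : ℝ := x2 ⬝ᵥ (M *ᵥ us) with hb2
      set uu : ℝ → Fin N → ℝ := fun t => (1-t) • x2 + t • us with huu
      set v : ℝ → Fin N → ℝ :=
        fun t => (2*t*(1-t)*b2 + t^2*R) • x1 + (-(2*(1-t)*b)) • uu t with hv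
      have huuc : Continuous uu := by
        rw [huu]
        exact ((continuous_const.sub continuous_id).smul continuous_const).add
          (continuous_id.smul continuous_const)
      have hc1 : Continuous fun t : ℝ => 2*t*(1-t)*b2 + t^2*R := by
        apply Continuous.add
        · exact ((continuous_const.mul continuous_id).mul
            (continuous_const.sub continuous_id)).mul continuous_const
        · exact (continuous_pow 2).mul continuous_const
      have hc2 : Continuous fun t : ℝ => -(2*(1-t)*b) := by
        apply Continuous.neg
        exact (continuous_const.mul (continuous_const.sub continuous_id)).mul continuous_const
      have hvc : Continuous v := by
        rw [hv]
        exact (hc1.smul continuous_const).add (hc2.smul huuc)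
      have huuM : ∀ t : ℝ, uu t ⬝ᵥ (M *ᵥ uu t) = 2*t*(1-t)*b2 + t^2*R := by
        intro t
        rw [huu]
        simp only
        rw [bil_comb, hM22, ← hb2, sym_dot hsymM us x2, ← hb2, ← hR]
        ring
      have hfuu : ∀ t : ℝ, x1 ⬝ᵥ (M *ᵥ uu t) = (1-t)*b := by
        intro t
        rw [huu]
        simp only
        rw [bil_left, ← hbdef, hfu]
        ring
      have hfuu' : ∀ t : ℝ, uu t ⬝ᵥ (M *ᵥ x1) = (1-t)*b := by
        intro t
        rw [sym_dot hsymM (uu t) x1, hfuu]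
      have hMvv : ∀ t : ℝ, v t ⬝ᵥ (M *ᵥ v t) = 0 := by
        intro t
        rw [hv]
        simp only
        rw [bil_comb, hM11, hfuu, hfuu', huuM]
        ring
      have hq : ∀ t ∈ Set.Icc (0:ℝ) 1, v t ⬝ᵥ (A *ᵥ v t) = c * (v t ⬝ᵥ v t) := by
        intro t _
        have h := hMvv t
        rw [hMval] at h
        linarith
      have hcoef1 : (2*(1:ℝ)*(1-1)*b2 + 1^2*R) = R := by ring
      have hcoef2 : (-(2*((1:ℝ)-1)*b)) = 0 := by ring
      have hv1eq : v 1 = R • x1 := by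
        rw [hv]
        simp only
        rw [hcoef1, hcoef2, zero_smul, add_zero]
      have hs : ∀ t ∈ Set.Icc (0:ℝ) 1, v t ⬝ᵥ v t ≠ 0 := by
        intro t _ h0
        have hv0 : v t = 0 := hzero_of_dot _ h0
        have e1 : x1 ⬝ᵥ (M *ᵥ v t) = 0 := by rw [hv0, Matrix.mulVec_zero, dotProduct_zero]
        have e2 : x1 ⬝ᵥ (M *ᵥ v t) = -(2*(1-t)^2*b^2) := by
          rw [hv]
          simp only
          rw [bil_left, hM11, hfuu]
          ring
        rw [e2] at e1
        have hb2ne : b^2 ≠ 0 := pow_ne_zero 2 hb0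
        have ht1 : t = 1 := by
          have h1t : (1-t)^2 * b^2 = 0 := by linarith
          rcases mul_eq_zero.mp h1t with h | h
          · have h2 := pow_eq_zero_iff (n := 2) (by norm_num) |>.mp h
            linarith
          · exact absurd h hb2ne
        rw [ht1, hv1eq, smul_dot, hd1] at h0
        have hR0 : R = 0 := by
          have h2 := pow_eq_zero_iff (n := 2) (by norm_num) |>.mp (by linarith : R^2 = 0)
          exact h2
        exact hru hR0
      have huu0 : uu 0 = x2 := by rw [huu]; simp
      have hcoef3 : (2*(0:ℝ)*(1-0)*b2 + 0^2*R) = 0 := by ring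
      have hcoef4 : (-(2*((1:ℝ)-0)*b)) = -(2*b) := by ring
      have hv0eq : v 0 = (-(2*b)) • x2 := by
        rw [hv]
        simp only
        rw [hcoef3, hcoef4, zero_smul, zero_add, huu0]
      have h0 : v 0 ⬝ᵥ (Bm *ᵥ v 0) = (m1*s2 + m2*g2) * (v 0 ⬝ᵥ v 0) := by
        rw [hv0eq, smul_form, smul_dot, hBval, hs2, hg2, hd2]; ring
      have h1 : v 1 ⬝ᵥ (Bm *ᵥ v 1) = (m1*s1 + m2*g1) * (v 1 ⬝ᵥ v 1) := by
        rw [hv1eq, smul_form, smul_dot, hBval, hs1, hg1, hd1]; ring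
      have hy : yB ∈ Set.uIcc (m1*s2 + m2*g2) (m1*s1 + m2*g1) := by
        rw [Set.uIcc_comm]
        have hcomb : yB = β*(m1*s1 + m2*g1) + (1-β)*(m1*s2 + m2*g2) := by
          rw [hyB, hys, hyg]; ring
        rw [hcomb]
        exact convex_mem_uIcc hβ0 hβ1
      obtain ⟨x, hxu, hxa, hxb⟩ := brickman_core A Bm v hvc hs c hq yB _ _ h0 h1 hy
      exact ⟨x, finish x hxu hxa hxb⟩
    · -- degenerate case: the form vanishes on the kernel of the functional B(x1, ·)
      push_neg at hex
      have hker := exists_common_kernel hN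
        { toFun := fun u => x1 ⬝ᵥ (M *ᵥ u)
          map_add' := fun u v => by
            simp [Matrix.mulVec_add, dotProduct_add]
          map_smul' := fun a u => by
            simp [Matrix.mulVec_smul, dotProduct_smul] }
        { toFun := fun u => x2 ⬝ᵥ (M *ᵥ u)
          map_add' := fun u v => by
            simp [Matrix.mulVec_add, dotProduct_add]
          map_smul' := fun a u => by
            simp [Matrix.mulVec_smul, dotProduct_smul] }
      obtain ⟨w, hw0, hfw, hgw⟩ := hker
      have hfw' : x1 ⬝ᵥ (M *ᵥ w) = 0 := hfw
      have hgw' : x2 ⬝ᵥ (M *ᵥ w) = 0 := hgw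
      have hMww : w ⬝ᵥ (M *ᵥ w) = 0 := hex w hfw'
      have hww : w ⬝ᵥ w ≠ 0 := fun h => hw0 (hzero_of_dot w h)
      set yw : ℝ := (w ⬝ᵥ (Bm *ᵥ w)) / (w ⬝ᵥ w) with hywdef
      have hwB : w ⬝ᵥ (Bm *ᵥ w) = yw * (w ⬝ᵥ w) := by rw [hywdef]; field_simp
      have hyBmem : yB ∈ Set.uIcc (m1*s1 + m2*g1) (m1*s2 + m2*g2) := by
        have hcomb : yB = β*(m1*s1 + m2*g1) + (1-β)*(m1*s2 + m2*g2) := by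
          rw [hyB, hys, hyg]; ring
        rw [hcomb]
        exact convex_mem_uIcc hβ0 hβ1
      have hsplit := Set.uIcc_subset_uIcc_union_uIcc
        (a := m1*s1 + m2*g1) (b := yw) (c := m1*s2 + m2*g2)
      rcases hsplit hyBmem with hy | hy
      · -- arc from x1 to w
        set v : ℝ → Fin N → ℝ := fun t => (1-t) • x1 + t • w with hv
        have hvc : Continuous v := by
          rw [hv]
          exact ((continuous_const.sub continuous_id).smul continuous_const).add
            (continuous_id.smul continuous_const)
        have hMvv : ∀ t : ℝ, v t ⬝ᵥ (M *ᵥ v t) = 0 := by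
          intro t
          rw [hv]
          simp only
          rw [bil_comb, hM11, hfw', sym_dot hsymM w x1, hfw', hMww]
          ring
        have hq : ∀ t ∈ Set.Icc (0:ℝ) 1, v t ⬝ᵥ (A *ᵥ v t) = c * (v t ⬝ᵥ v t) := by
          intro t _
          have h := hMvv t
          rw [hMval] at h
          linarith
        have hv1eq : v 1 = w := by rw [hv]; simp
        have hs : ∀ t ∈ Set.Icc (0:ℝ) 1, v t ⬝ᵥ v t ≠ 0 := by
          intro t _ h0
          have hv0 : v t = 0 := hzero_of_dot _ h0
          have e1 : x2 ⬝ᵥ (M *ᵥ v t) = 0 := by rw [hv0, Matrix.mulVec_zero, dotProduct_zero]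
          have e2 : x2 ⬝ᵥ (M *ᵥ v t) = (1-t)*b := by
            rw [hv]
            simp only
            rw [bil_left, hb21, hgw']
            ring
          rw [e2] at e1
          have ht1 : t = 1 := by
            rcases mul_eq_zero.mp e1 with h | h
            · linarith
            · exact absurd h hb0
          rw [ht1, hv1eq] at h0
          exact hww h0
        have hv0eq : v 0 = x1 := by rw [hv]; simp
        have h0 : v 0 ⬝ᵥ (Bm *ᵥ v 0) = (m1*s1 + m2*g1) * (v 0 ⬝ᵥ v 0) := by
          rw [hv0eq, hBval, hs1, hg1, hd1]; ring
        have h1 : v 1 ⬝ᵥ (Bm *ᵥ v 1) = yw * (v 1 ⬝ᵥ v 1) := by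
          rw [hv1eq, hwB]
        obtain ⟨x, hxu, hxa, hxb⟩ := brickman_core A Bm v hvc hs c hq yB _ _ h0 h1 hy
        exact ⟨x, finish x hxu hxa hxb⟩
      · -- arc from w to x2
        set v : ℝ → Fin N → ℝ := fun t => (1-t) • w + t • x2 with hv
        have hvc : Continuous v := by
          rw [hv]
          exact ((continuous_const.sub continuous_id).smul continuous_const).add
            (continuous_id.smul continuous_const)
        have hMvv : ∀ t : ℝ, v t ⬝ᵥ (M *ᵥ v t) = 0 := by
          intro t
          rw [hv]
          simp only
          rw [bil_comb, hMww, hM22, sym_dot hsymM w x2, hgw']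
          ring
        have hq : ∀ t ∈ Set.Icc (0:ℝ) 1, v t ⬝ᵥ (A *ᵥ v t) = c * (v t ⬝ᵥ v t) := by
          intro t _
          have h := hMvv t
          rw [hMval] at h
          linarith
        have hv0eq : v 0 = w := by rw [hv]; simp
        have hs : ∀ t ∈ Set.Icc (0:ℝ) 1, v t ⬝ᵥ v t ≠ 0 := by
          intro t _ h0
          have hv0 : v t = 0 := hzero_of_dot _ h0
          have e1 : x1 ⬝ᵥ (M *ᵥ v t) = 0 := by rw [hv0, Matrix.mulVec_zero, dotProduct_zero]
          have e2 : x1 ⬝ᵥ (M *ᵥ v t) = t*b := by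
            rw [hv]
            simp only
            rw [bil_left, hfw', ← hbdef]
            ring
          rw [e2] at e1
          have ht0 : t = 0 := by
            rcases mul_eq_zero.mp e1 with h | h
            · exact h
            · exact absurd h hb0
          rw [ht0, hv0eq] at h0
          exact hww h0
        have hv1eq : v 1 = x2 := by rw [hv]; simp
        have h0 : v 0 ⬝ᵥ (Bm *ᵥ v 0) = yw * (v 0 ⬝ᵥ v 0) := by
          rw [hv0eq, hwB]
        have h1 : v 1 ⬝ᵥ (Bm *ᵥ v 1) = (m1*s2 + m2*g2) * (v 1 ⬝ᵥ v 1) := by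
          rw [hv1eq, hBval, hs2, hg2, hd2]; ring
        obtain ⟨x, hxu, hxa, hxb⟩ := brickman_core A Bm v hvc hs c hq yB _ _ h0 h1 hy
        exact ⟨x, finish x hxu hxa hxb⟩
end

section
/- The functions h₊(α) = max{v^T L v : v ∈ S(α), ‖v‖=1} and h₋(α) = min{v^T L v : v ∈ S(α), ‖v‖=1}, where S(α) is the eigenspace of M(α) = P² - αL for its smallest eigenvalue, are monotonically nondecreasing: α1 < α2 implies h₊(α1) ≤ h₊(α2) and h₋(α1) ≤ h₋(α2). -/
open Matrix BigOperators Finset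

lemma aux_transpose_dot {N : ℕ} (A : Matrix (Fin N) (Fin N) ℝ) (u y : Fin N → ℝ) :
    (Aᵀ *ᵥ u) ⬝ᵥ y = u ⬝ᵥ (A *ᵥ y) := by
  simp only [Matrix.mulVec_transpose, ← Matrix.dotProduct_mulVec]

lemma aux_dot_self {N : ℕ} (v : Fin N → ℝ) (hv : ∑ i, (v i) ^ 2 = 1) : v ⬝ᵥ v = 1 := by
  simpa [dotProduct, ← sq] using hv

lemma aux_identity {N : ℕ} (P2 L : Matrix (Fin N) (Fin N) ℝ) (β δ c : ℝ) (v : Fin N → ℝ)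
    (hv : ∑ i, (v i) ^ 2 = 1) (hev : (P2 - β • L) *ᵥ v = c • v) :
    v ⬝ᵥ ((P2 - δ • L) *ᵥ v) = c - (δ - β) * (v ⬝ᵥ (L *ᵥ v)) := by
  have h1 : P2 - δ • L = (P2 - β • L) - (δ - β) • L := by
    rw [sub_smul]; abel
  rw [h1, Matrix.sub_mulVec, hev, Matrix.smul_mulVec, dotProduct_sub,
    dotProduct_smul, dotProduct_smul, smul_eq_mul, smul_eq_mul,
    aux_dot_self v hv, mul_one]

lemma aux_exists {N : ℕ} (P2 L : Matrix (Fin N) (Fin N) ℝ)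
    (hP2 : P2.IsHermitian) (hL : L.IsHermitian) (q : ℝ → ℝ)
    (hq : ∀ α : ℝ, IsLeast
      {r : ℝ | ∃ v : Fin N → ℝ, (∑ i, (v i) ^ 2 = 1) ∧
        r = v ⬝ᵥ ((P2 - α • L) *ᵥ v)} (q α)) (α : ℝ) :
    ∃ v : Fin N → ℝ, (∑ i, (v i) ^ 2 = 1) ∧ (P2 - α • L) *ᵥ v = q α • v := by
  have hM : (P2 - α • L).IsHermitian := by
    refine hP2.sub ?_
    simpa [Matrix.IsHermitian, Matrix.conjTranspose_smul] using congrArg (α • ·) hL.eq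
  obtain ⟨w, hw, hwq⟩ := (hq α).1
  have hN : Nonempty (Fin N) := by
    by_contra h
    rw [not_nonempty_iff] at h
    simp [Finset.univ_eq_empty] at hw
  obtain ⟨i₀, -, hi₀⟩ := Finset.exists_min_image Finset.univ hM.eigenvalues
    ⟨Classical.arbitrary _, Finset.mem_univ _⟩
  set μ := hM.eigenvalues i₀ with hμ
  set b : Fin N → ℝ := ⇑(hM.eigenvectorBasis i₀) with hb
  have h1 : ‖hM.eigenvectorBasis i₀‖ = 1 := hM.eigenvectorBasis.orthonormal.1 i₀
  have hbsum : ∑ i, (b i) ^ 2 = 1 := by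
    have h2 := EuclideanSpace.norm_eq (hM.eigenvectorBasis i₀)
    rw [h1] at h2
    have h3 : Real.sqrt (∑ i, ‖hM.eigenvectorBasis i₀ i‖ ^ 2) = 1 := h2.symm
    have h4 := Real.sqrt_eq_one.mp h3
    simpa [Real.norm_eq_abs, sq_abs] using h4
  have hbnorm : b ⬝ᵥ b = 1 := aux_dot_self b hbsum
  have hbev : (P2 - α • L) *ᵥ b = μ • b := hM.mulVec_eigenvectorBasis i₀
  have hqleμ : q α ≤ μ := by
    apply (hq α).2
    refine ⟨b, hbsum, ?_⟩
    rw [hbev, dotProduct_smul, smul_eq_mul, hbnorm, mul_one]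
  have hμleq : μ ≤ q α := by
    set U : Matrix (Fin N) (Fin N) ℝ := (hM.eigenvectorUnitary : Matrix (Fin N) (Fin N) ℝ) with hU
    have hstarU : star U = Uᵀ := by
      ext i j; simp [Matrix.conjTranspose_apply]
    set c : Fin N → ℝ := Uᵀ *ᵥ w with hc
    have hUstar : U * Uᵀ = 1 := by
      rw [← hstarU]; exact Matrix.mem_unitaryGroup_iff.mp hM.eigenvectorUnitary.2
    have hcc : c ⬝ᵥ c = 1 := by
      rw [hc, aux_transpose_dot, Matrix.mulVec_mulVec, hUstar, Matrix.one_mulVec]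
      exact aux_dot_self w hw
    have hcsum : ∑ i, (c i) ^ 2 = 1 := by
      simpa [dotProduct, ← sq] using hcc
    have hspec : (P2 - α • L) = U * Matrix.diagonal hM.eigenvalues * Uᵀ := by
      have h5 := hM.spectral_theorem
      rw [Unitary.conjStarAlgAut_apply, ← hU, hstarU] at h5
      simpa using h5
    have hwM : w ⬝ᵥ ((P2 - α • L) *ᵥ w) = ∑ i, hM.eigenvalues i * (c i) ^ 2 := by
      conv_lhs => rw [hspec, ← Matrix.mulVec_mulVec, ← Matrix.mulVec_mulVec,
        ← aux_transpose_dot]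
      show c ⬝ᵥ (Matrix.diagonal hM.eigenvalues *ᵥ c) = _
      simp only [dotProduct, Matrix.mulVec_diagonal]
      exact Finset.sum_congr rfl fun i _ => by ring
    rw [hwq, hwM]
    have h6 : ∑ i, μ * (c i) ^ 2 = μ := by rw [← Finset.mul_sum, hcsum, mul_one]
    calc μ = ∑ i, μ * (c i) ^ 2 := h6.symm
      _ ≤ ∑ i, hM.eigenvalues i * (c i) ^ 2 :=
        Finset.sum_le_sum fun i _ =>
          mul_le_mul_of_nonneg_right (hi₀ i (Finset.mem_univ i)) (sq_nonneg _)
  have hμq : μ = q α := le_antisymm hμleq hqleμ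
  exact ⟨b, hbsum, by rw [hbev, hμq]⟩

/-- The functions `h₊(α) = max{vᵀLv : v ∈ S(α), ‖v‖=1}` and
`h₋(α) = min{vᵀLv : v ∈ S(α), ‖v‖=1}`, where `S(α)` is the eigenspace of
`M(α) = P² - αL` for its smallest eigenvalue `q(α)`, are monotonically
nondecreasing in `α`. -/
theorem stmt9 {N : ℕ} (P2 L : Matrix (Fin N) (Fin N) ℝ)
    (hP2 : P2.IsHermitian) (hL : L.IsHermitian)
    (q : ℝ → ℝ)
    (hq : ∀ α : ℝ, IsLeast
      {r : ℝ | ∃ v : Fin N → ℝ, (∑ i, (v i) ^ 2 = 1) ∧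
        r = v ⬝ᵥ ((P2 - α • L) *ᵥ v)} (q α))
    (R : ℝ → Set ℝ)
    (hR : ∀ α : ℝ, R α = {r : ℝ | ∃ v : Fin N → ℝ, (∑ i, (v i) ^ 2 = 1) ∧
      (P2 - α • L) *ᵥ v = q α • v ∧ r = v ⬝ᵥ (L *ᵥ v)})
    (α1 α2 : ℝ) (h12 : α1 < α2) :
    sSup (R α1) ≤ sSup (R α2) ∧ sInf (R α1) ≤ sInf (R α2) := by
  -- general upper/lower bounds
  have up : ∀ β γ : ℝ, β < γ → ∀ r ∈ R β, r ≤ (q β - q γ) / (γ - β) := by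
    intro β γ hβγ r hr
    rw [hR β] at hr
    obtain ⟨v, hv, hev, hrv⟩ := hr
    have h1 := aux_identity P2 L β γ (q β) v hv hev
    have h2 : q γ ≤ v ⬝ᵥ ((P2 - γ • L) *ᵥ v) := (hq γ).2 ⟨v, hv, rfl⟩
    rw [h1, ← hrv] at h2
    rw [le_div_iff₀ (by linarith)]
    linarith
  have down : ∀ β γ : ℝ, β < γ → ∀ r ∈ R γ, (q β - q γ) / (γ - β) ≤ r := by
    intro β γ hβγ r hr
    rw [hR γ] at hr
    obtain ⟨v, hv, hev, hrv⟩ := hr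
    have h1 := aux_identity P2 L γ β (q γ) v hv hev
    have h2 : q β ≤ v ⬝ᵥ ((P2 - β • L) *ᵥ v) := (hq β).2 ⟨v, hv, rfl⟩
    rw [h1, ← hrv] at h2
    rw [div_le_iff₀ (by linarith)]
    linarith
  have hne : ∀ α : ℝ, (R α).Nonempty := by
    intro α
    obtain ⟨v, hv, hev⟩ := aux_exists P2 L hP2 hL q hq α
    exact ⟨v ⬝ᵥ (L *ᵥ v), by rw [hR]; exact ⟨v, hv, hev, rfl⟩⟩
  obtain ⟨r1, hr1⟩ := hne α1
  obtain ⟨r2, hr2⟩ := hne α2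
  constructor
  · have hs1 : sSup (R α1) ≤ (q α1 - q α2) / (α2 - α1) :=
      csSup_le (hne α1) (up α1 α2 h12)
    have hbdd2 : BddAbove (R α2) :=
      ⟨(q α2 - q (α2 + 1)) / (α2 + 1 - α2), fun r hr => up α2 (α2 + 1) (by linarith) r hr⟩
    have hs2 : (q α1 - q α2) / (α2 - α1) ≤ sSup (R α2) :=
      le_trans (down α1 α2 h12 r2 hr2) (le_csSup hbdd2 hr2)
    linarith
  · have hbdd1 : BddBelow (R α1) :=
      ⟨(q (α1 - 1) - q α1) / (α1 - (α1 - 1)), fun r hr => down (α1 - 1) α1 (by linarith) r hr⟩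
    have hi1 : sInf (R α1) ≤ (q α1 - q α2) / (α2 - α1) :=
      le_trans (csInf_le hbdd1 hr1) (up α1 α2 h12 r1 hr1)
    have hi2 : (q α1 - q α2) / (α2 - α1) ≤ sInf (R α2) :=
      le_csInf (hne α2) (down α1 α2 h12)
    linarith
end

section
/- The uncertainty curve of the complete graph on N vertices is γ(s) = [N - s(N-2) - 2√(1 - (N-2)(s-1) - (N-1)(s-1)²)] / [4 + (N-2)²/(N-1)] for 0 ≤ s ≤ N/(N-1); equivalently, the minimal graph spread g and spectral spread s of unit vectors of the form (cos θ, sin θ/√(N-1), …, sin θ/√(N-1)) satisfy the ellipse equation (2g - 1)² + (N-1)(s + (N-2)g/(N-1) - 1)² = 1. -/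
open Matrix BigOperators Finset Real


lemma sum_ite_fin {N : ℕ} (hN : 1 ≤ N) (a b : ℝ) :
    ∑ i : Fin N, (if (i:ℕ) = 0 then a else b) = a + ((N:ℝ)-1)*b := by
  have h0 : (⟨0, by omega⟩ : Fin N) ∈ (univ : Finset (Fin N)) := mem_univ _
  have key : ∀ i : Fin N, (if (i:ℕ) = 0 then a else b)
      = (if i = (⟨0, by omega⟩ : Fin N) then a - b else 0) + b := by
    intro i
    by_cases hi : (i:ℕ) = 0
    · rw [if_pos hi, if_pos (Fin.ext hi)]; ring
    · rw [if_neg hi, if_neg (fun h => hi (by simp [h]))]; ring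
  simp only [key]
  rw [Finset.sum_add_distrib, Finset.sum_ite_eq' univ, if_pos h0, Finset.sum_const]
  simp [Finset.card_univ]
  ring

lemma quadL {N : ℕ} (hN : 2 ≤ N) (x : Fin N → ℝ) :
    x ⬝ᵥ (((fun i j => if i = j then (1:ℝ) else -(1/((N:ℝ)-1))) : Matrix (Fin N) (Fin N) ℝ) *ᵥ x)
      = ((N:ℝ)/((N:ℝ)-1)) * ∑ i, x i^2 - (∑ i, x i)^2/((N:ℝ)-1) := by
  set c : ℝ := 1/((N:ℝ)-1) with hc
  have hrow : ∀ i : Fin N, (((fun i j => if i = j then (1:ℝ) else -c) : Matrix (Fin N) (Fin N) ℝ) *ᵥ x) i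
      = (1+c) * x i - c * ∑ j, x j := by
    intro i
    simp only [Matrix.mulVec, dotProduct]
    have : ∀ j : Fin N, (if i = j then (1:ℝ) else -c) * x j
        = (1+c) * (if j = i then x j else 0) - c * x j := by
      intro j
      by_cases h : i = j
      · rw [if_pos h, if_pos h.symm]; ring
      · rw [if_neg h, if_neg (Ne.symm h)]; ring
    simp only [this]
    rw [Finset.sum_sub_distrib, ← Finset.mul_sum, ← Finset.mul_sum,
      Finset.sum_ite_eq' univ, if_pos (mem_univ i)]
  simp only [dotProduct, hrow]
  have h1 : ∀ i : Fin N, x i * ((1+c) * x i - c * ∑ j, x j)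
      = (1+c) * x i^2 - c * ((∑ j, x j) * x i) := by intro i; ring
  simp only [h1]
  rw [Finset.sum_sub_distrib, ← Finset.mul_sum, ← Finset.mul_sum, ← Finset.mul_sum]
  have hne : ((N:ℝ)-1) ≠ 0 := by
    have : (2:ℝ) ≤ (N:ℝ) := by exact_mod_cast hN
    linarith
  rw [hc]
  field_simp
  ring

lemma quadP {N : ℕ} (hN : 1 ≤ N) (x : Fin N → ℝ) :
    x ⬝ᵥ (Matrix.diagonal (fun i : Fin N => if (i : ℕ) = 0 then (0 : ℝ) else 1) *ᵥ x)
      = ∑ i, x i^2 - (x ⟨0, by omega⟩)^2 := by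
  simp only [dotProduct, Matrix.mulVec_diagonal]
  have key : ∀ i : Fin N, x i * ((if (i:ℕ) = 0 then (0:ℝ) else 1) * x i)
      = x i ^2 - (if i = (⟨0, by omega⟩ : Fin N) then x i ^2 else 0) := by
    intro i
    by_cases hi : (i:ℕ) = 0
    · rw [if_pos hi, if_pos (Fin.ext hi)]; ring
    · rw [if_neg hi, if_neg (fun h => hi (by simp [h]))]; ring
  simp only [key]
  rw [Finset.sum_sub_distrib, Finset.sum_ite_eq' univ, if_pos (mem_univ _)]

lemma lower_core {n T E g a S : ℝ} (hn : 3 ≤ n)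
    (hT0 : 0 ≤ T) (hE0 : 0 ≤ E) (hE2 : E^2 = (n-1)*T*(n-T))
    (hS : S^2 = T) (hg : g = 1 - a^2)
    (hCS : (S - a)^2 ≤ (n-1) * (1 - a^2)) :
    (n*(T+1) - 2*T - 2*E)/n^2 ≤ g := by
  have hn0 : (0:ℝ) < n^2 := by nlinarith
  rw [div_le_iff₀ hn0]
  set R := n*(T+1) - 2*T - n^2*g with hR
  have : R ≤ 2*E := by
    rcases le_or_gt R 0 with h | h
    · linarith
    · have hu : T + 1 - n*g ≤ 2*(a*S) := by nlinarith [hCS]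
      have hu0 : 0 < T + 1 - n*g := by nlinarith
      have hq : (T + 1 - n*g)^2 ≤ 4*(1-g)*T := by
        have h4 : (2*(a*S))^2 = 4*(1-g)*T := by
          have : a^2 * S^2 = (1-g)*T := by rw [hS]; nlinarith [hg]
          nlinarith [this]
        nlinarith [hu, hu0]
      have hR2 : R^2 ≤ 4*E^2 := by nlinarith [hq, hE2]
      nlinarith [hR2, h, hE0]
  linarith




/-- The uncertainty curve of the complete graph on `N` vertices:
the θ-family of unit vectors `(cos θ, sin θ/√(N-1), …)` traces the ellipse
`(2g-1)² + (N-1)(s + (N-2)g/(N-1) - 1)² = 1`, and for `0 ≤ s ≤ N/(N-1)` the minimal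
graph spread among unit vectors with spectral spread `s` equals
`[N - s(N-2) - 2√(1-(N-2)(s-1)-(N-1)(s-1)²)] / [4 + (N-2)²/(N-1)]`. -/
theorem stmt11 {N : ℕ} (hN : 3 ≤ N)
    (L : Matrix (Fin N) (Fin N) ℝ)
    (hL : L = fun i j => if i = j then (1 : ℝ) else -(1 / ((N : ℝ) - 1)))
    (P2 : Matrix (Fin N) (Fin N) ℝ)
    (hP2 : P2 = Matrix.diagonal (fun i : Fin N => if (i : ℕ) = 0 then (0 : ℝ) else 1)) :
    (∀ θ : ℝ,
      let x : Fin N → ℝ := fun i =>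
        if (i : ℕ) = 0 then Real.cos θ else Real.sin θ / Real.sqrt ((N : ℝ) - 1)
      let s : ℝ := x ⬝ᵥ (L *ᵥ x)
      let g : ℝ := x ⬝ᵥ (P2 *ᵥ x)
      (2 * g - 1) ^ 2 +
        ((N : ℝ) - 1) * (s + ((N : ℝ) - 2) * g / ((N : ℝ) - 1) - 1) ^ 2 = 1) ∧
    (∀ s : ℝ, 0 ≤ s → s ≤ (N : ℝ) / ((N : ℝ) - 1) →
      IsLeast {g : ℝ | ∃ x : Fin N → ℝ, (∑ i, (x i) ^ 2 = 1) ∧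
          x ⬝ᵥ (L *ᵥ x) = s ∧ g = x ⬝ᵥ (P2 *ᵥ x)}
        (((N : ℝ) - s * ((N : ℝ) - 2) -
            2 * Real.sqrt (1 - ((N : ℝ) - 2) * (s - 1) - ((N : ℝ) - 1) * (s - 1) ^ 2)) /
          (4 + ((N : ℝ) - 2) ^ 2 / ((N : ℝ) - 1)))) := by
  constructor
  ·
      have hN3 : (3:ℝ) ≤ (N:ℝ) := by exact_mod_cast hN
      have hKpos : (0:ℝ) < (N:ℝ) - 1 := by linarith
      have hKne : ((N:ℝ) - 1) ≠ 0 := ne_of_gt hKpos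
      set r : ℝ := Real.sqrt ((N:ℝ)-1) with hrdef
      have hr2 : r^2 = (N:ℝ)-1 := Real.sq_sqrt (le_of_lt hKpos)
      have hrpos : 0 < r := Real.sqrt_pos.mpr hKpos
      have hrne : r ≠ 0 := ne_of_gt hrpos
      intro θ
      set c := Real.cos θ
      set si := Real.sin θ
      set x : Fin N → ℝ := fun i => if (i:ℕ) = 0 then c else si / r with hx
      have hpyth : si^2 + c^2 = 1 := Real.sin_sq_add_cos_sq θ
      have hsumx : ∑ i, x i = c + ((N:ℝ)-1) * (si/r) := sum_ite_fin (by omega) c (si/r)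
      have hsq : ∀ i : Fin N, x i ^2 = if (i:ℕ) = 0 then c^2 else (si/r)^2 := by
        intro i; by_cases hi : (i:ℕ) = 0 <;> simp [hx, hi]
      have hsumx2 : ∑ i, x i ^2 = c^2 + ((N:ℝ)-1) * (si/r)^2 := by
        simp only [hsq]; exact sum_ite_fin (by omega) _ _
      have hsumx2' : ∑ i, x i ^2 = 1 := by
        rw [hsumx2, div_pow, hr2]
        field_simp
        linarith [hpyth]
      have hx0 : x ⟨0, by omega⟩ = c := by simp [hx]
      have hs : x ⬝ᵥ (L *ᵥ x) = ((N:ℝ)/((N:ℝ)-1)) - (c + r*si)^2/((N:ℝ)-1) := by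
        rw [hL, quadL (by omega), hsumx2', hsumx]
        have : ((N:ℝ)-1) * (si/r) = r * si := by
          field_simp
          linear_combination (-si) * hr2
        rw [this]; ring
      have hg : x ⬝ᵥ (P2 *ᵥ x) = si^2 := by
        rw [hP2, quadP (by omega), hsumx2', hx0]
        linarith [hpyth]
      simp only [hs, hg]
      have h2 : ((N:ℝ)/((N:ℝ)-1)) - (c + r*si)^2/((N:ℝ)-1) + ((N:ℝ)-2)*si^2/((N:ℝ)-1) - 1
          = -2*r*c*si/((N:ℝ)-1) := by
        field_simp
        linear_combination -hpyth - si^2*hr2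
      rw [h2, div_pow, mul_pow]
      have h3 : ((N:ℝ)-1) * ((-2*r*c)^2*si^2/((N:ℝ)-1)^2) = 4*c^2*si^2*(r^2/((N:ℝ)-1)) := by
        field_simp; ring
      rw [h3, hr2, div_self hKne]
      linear_combination (4*si^2)*hpyth
  ·
      have hN3 : (3:ℝ) ≤ (N:ℝ) := by exact_mod_cast hN
      have hKpos : (0:ℝ) < (N:ℝ) - 1 := by linarith
      have hKne : ((N:ℝ) - 1) ≠ 0 := ne_of_gt hKpos
      have hNpos : (0:ℝ) < (N:ℝ) := by linarith
      have hNne : (N:ℝ) ≠ 0 := ne_of_gt hNpos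
      intro s hs0 hs1
      set K : ℝ := (N:ℝ) - 1 with hKdef
      set T : ℝ := (N:ℝ) - K * s with hTdef
      have hT0 : 0 ≤ T := by
        have h := (le_div_iff₀ hKpos).mp hs1
        simp only [hTdef]; linarith
      have hTN : T ≤ (N:ℝ) := by simp [hTdef]; nlinarith
      set D : ℝ := K * T * ((N:ℝ) - T) with hDdef
      have hD : 0 ≤ D := by
        apply mul_nonneg (mul_nonneg (le_of_lt hKpos) hT0); linarith
      set E : ℝ := Real.sqrt D with hEdef
      have hE0 : 0 ≤ E := Real.sqrt_nonneg _
      have hE2 : E^2 = D := Real.sq_sqrt hD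
      -- rewrite the stated quantity
      have hin : 1 - ((N:ℝ)-2)*(s-1) - ((N:ℝ)-1)*(s-1)^2 = D * (1/K)^2 := by
        field_simp [hDdef, hTdef]
        ring
      have hsqrt : Real.sqrt (1 - ((N:ℝ)-2)*(s-1) - ((N:ℝ)-1)*(s-1)^2) = E * (1/K) := by
        rw [hin, Real.sqrt_mul hD, Real.sqrt_sq (by positivity)]
      have hgs : ((N : ℝ) - s * ((N : ℝ) - 2) -
            2 * Real.sqrt (1 - ((N:ℝ)-2)*(s-1) - ((N:ℝ)-1)*(s-1)^2)) /
            (4 + ((N : ℝ) - 2) ^ 2 / ((N : ℝ) - 1))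
          = ((N:ℝ)*(T+1) - 2*T - 2*E)/(N:ℝ)^2 := by
        rw [hsqrt]
        have hden : 4 + ((N:ℝ)-2)^2/((N:ℝ)-1) = (N:ℝ)^2 / K := by
          have hK' : (N:ℝ) - 1 ≠ 0 := hKne
          rw [hKdef, eq_div_iff hK', add_mul, div_mul_cancel₀ _ hK']; ring
        rw [hden]
        simp only [hTdef]
        rw [div_eq_div_iff (by positivity) (by positivity)]
        field_simp
        ring
      rw [hgs]
      set g1 : ℝ := ((N:ℝ)*(T+1) - 2*T - 2*E)/(N:ℝ)^2 with hg1def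
      have hKey : (N:ℝ)^2*(1-g1) = K*((N:ℝ)-T) + T + 2*E := by
        simp only [hg1def, hKdef]; field_simp; ring
      have h1gnn : 0 ≤ 1 - g1 := by
        nlinarith [hKey, hE0, hT0, mul_nonneg hKpos.le (sub_nonneg.mpr hTN), sq_nonneg (N:ℝ)]
      set a : ℝ := Real.sqrt (1 - g1) with hadef
      have ha2 : a^2 = 1 - g1 := Real.sq_sqrt h1gnn
      have hTg : T*(1-g1) = ((T+E)/(N:ℝ))^2 := by
        have h' : ((T+E)/(N:ℝ))^2 = (T^2 + 2*T*E + E^2)/(N:ℝ)^2 := by ring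
        rw [h', hE2, hDdef, eq_div_iff (by positivity)]
        linear_combination T * hKey
      have hsa : Real.sqrt T * a = (T+E)/(N:ℝ) := by
        rw [hadef, ← Real.sqrt_mul hT0, hTg, Real.sqrt_sq (by positivity)]
      have key : (Real.sqrt T - a)^2 = K*g1 := by
        have hT' : Real.sqrt T ^ 2 = T := Real.sq_sqrt hT0
        have expand : (Real.sqrt T - a)^2 = T + (1-g1) - 2*((T+E)/(N:ℝ)) := by
          linear_combination hT' + ha2 - 2*hsa
        rw [expand]
        simp only [hg1def, hKdef]; field_simp; ring
      set b : ℝ := (Real.sqrt T - a)/K with hbdef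
      have hKb2 : K * b^2 = g1 := by
        have hb2 : b^2 = (Real.sqrt T - a)^2/K^2 := by rw [hbdef, div_pow]
        rw [hb2, key]; field_simp
      have hKb : K * b = Real.sqrt T - a := by rw [hbdef]; field_simp
      set x : Fin N → ℝ := fun i => if (i:ℕ) = 0 then a else b with hxdef
      have hsq : ∀ i : Fin N, x i ^2 = if (i:ℕ) = 0 then a^2 else b^2 := by
        intro i; simp only [hxdef]; split_ifs <;> rfl
      have hx2sum : ∑ i, x i ^2 = 1 := by
        simp only [hsq]
        rw [sum_ite_fin (by omega), ← hKdef, hKb2, ha2]; ring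
      have hsumx : ∑ i, x i = Real.sqrt T := by
        rw [hxdef, sum_ite_fin (by omega), ← hKdef, hKb]; ring
      have hx0 : x ⟨0, by omega⟩ = a := by simp only [hxdef]; exact if_pos trivial
      constructor
      · refine ⟨x, hx2sum, ?_, ?_⟩
        · rw [hL, quadL (by omega), hx2sum, hsumx, Real.sq_sqrt hT0, ← hKdef]
          simp only [hTdef]
          field_simp
          ring
        · rw [hP2, quadP (by omega), hx2sum, hx0, ha2]; ring
      · rintro g ⟨y, hy1, hys, hyg⟩
        set ay : ℝ := y ⟨0, by omega⟩ with haydef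
        set S : ℝ := ∑ i, y i with hSdef
        have hgq : g = 1 - ay^2 := by rw [hyg, hP2, quadP (by omega), hy1]
        have hS2 : S^2 = T := by
          rw [hL, quadL (by omega), hy1, ← hKdef, ← hSdef] at hys
          simp only [hTdef]
          field_simp at hys
          linarith
        have h0mem : (⟨0, by omega⟩ : Fin N) ∈ (univ : Finset (Fin N)) := mem_univ _
        have e1 : ∑ i ∈ univ.erase ⟨0, by omega⟩, y i = S - ay := by
          have := Finset.sum_erase_add univ y h0mem
          rw [← hSdef] at this; linarith
        have e2 : ∑ i ∈ univ.erase ⟨0, by omega⟩, (y i)^2 = 1 - ay^2 := by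
          have h := Finset.sum_erase_add univ (fun i => (y i)^2) h0mem
          beta_reduce at h
          rw [hy1] at h
          simp only [haydef]
          linarith [h]
        have ecard : ((univ.erase (⟨0, by omega⟩ : Fin N)).card : ℝ) = K := by
          rw [Finset.card_erase_of_mem h0mem, Finset.card_univ, Fintype.card_fin]
          rw [hKdef]
          push_cast [Nat.cast_sub (by omega : 1 ≤ N)]
          ring
        have hCS : (S - ay)^2 ≤ K * (1 - ay^2) := by
          have h := Finset.sum_mul_sq_le_sq_mul_sq (univ.erase (⟨0, by omega⟩ : Fin N))
            (fun _ => (1:ℝ)) y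
          simp only [one_mul, one_pow] at h
          rw [e1, e2, Finset.sum_const, nsmul_eq_mul] at h
          rw [mul_one] at h
          calc (S - ay)^2 ≤ ((univ.erase (⟨0, by omega⟩ : Fin N)).card : ℝ) * (1 - ay^2) := h
            _ = K * (1 - ay^2) := by rw [ecard]
        have hE2' : E^2 = ((N:ℝ)-1)*T*((N:ℝ)-T) := by rw [hE2, hDdef, hKdef]
        exact lower_core hN3 hT0 hE0 hE2' hS2 hgq hCS
end

section
/- For the complete graph on N vertices with distance matrix P = diag(0,1,…,1), any unit vector x achieving the minimum of x^T P² x subject to x^T L x = s (for s in the open interval (0, N/(N-1))) has all coordinates except the first equal to each other. -/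
open Matrix BigOperators Finset

lemma sum_sub_sq_aux {ι : Type*} (T : Finset ι) (f : ι → ℝ) :
    ∑ i ∈ T, ∑ j ∈ T, (f i - f j)^2
      = 2*((T.card : ℝ) * ∑ i ∈ T, (f i)^2 - (∑ i ∈ T, f i)^2) := by
  have h : ∀ i ∈ T, ∑ j ∈ T, (f i - f j)^2
      = (T.card : ℝ) * (f i)^2 - 2 * f i * (∑ j ∈ T, f j) + ∑ j ∈ T, (f j)^2 := by
    intro i _
    rw [Finset.sum_congr rfl (fun j _ => (by ring : (f i - f j)^2 = (f i)^2 - 2 * f i * f j + (f j)^2))]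
    rw [Finset.sum_add_distrib, Finset.sum_sub_distrib, Finset.sum_const, ← Finset.mul_sum]
    ring
  rw [Finset.sum_congr rfl h, Finset.sum_add_distrib, Finset.sum_sub_distrib,
    Finset.sum_const, ← Finset.mul_sum, ← Finset.sum_mul, ← Finset.mul_sum]
  ring

/-- For the complete graph on `N ≥ 3` vertices with distance matrix
`P = diag(0,1,…,1)`, any unit vector `x` achieving the minimum of `xᵀP²x` subject to
`xᵀLx = s` (for `s` in the open interval `(0, N/(N-1))`) has all coordinates except
the first equal to each other. -/
theorem stmt12 {N : ℕ} (hN : 3 ≤ N)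
    (L : Matrix (Fin N) (Fin N) ℝ)
    (hL : L = fun i j => if i = j then (1 : ℝ) else -(1 / ((N : ℝ) - 1)))
    (P2 : Matrix (Fin N) (Fin N) ℝ)
    (hP2 : P2 = Matrix.diagonal (fun i : Fin N => if (i : ℕ) = 0 then (0 : ℝ) else 1))
    (s : ℝ) (hs0 : 0 < s) (hs1 : s < (N : ℝ) / ((N : ℝ) - 1))
    (x : Fin N → ℝ) (hx_unit : ∑ i, (x i) ^ 2 = 1)
    (hx_s : x ⬝ᵥ (L *ᵥ x) = s)
    (hx_min : ∀ y : Fin N → ℝ, (∑ i, (y i) ^ 2 = 1) → y ⬝ᵥ (L *ᵥ y) = s →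
      x ⬝ᵥ (P2 *ᵥ x) ≤ y ⬝ᵥ (P2 *ᵥ y)) :
    ∀ i j : Fin N, (i : ℕ) ≠ 0 → (j : ℕ) ≠ 0 → x i = x j := by
  haveI : NeZero N := ⟨by omega⟩
  have hNR : (0:ℝ) < (N:ℝ) - 1 := by
    have : (3:ℝ) ≤ (N:ℝ) := by exact_mod_cast hN
    linarith
  have hNne : (N:ℝ) - 1 ≠ 0 := ne_of_gt hNR
  have hNpos : (0:ℝ) < (N:ℝ) := by linarith
  have hNzne : (N:ℝ) ≠ 0 := ne_of_gt hNpos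
  -- quadratic form of L
  have hLq : ∀ v : Fin N → ℝ, v ⬝ᵥ (L *ᵥ v)
      = ((N:ℝ) * ∑ i, (v i)^2 - (∑ i, v i)^2) / ((N:ℝ)-1) := by
    intro v
    have hmv : ∀ i, (L *ᵥ v) i
        = (-(1/((N:ℝ)-1))) * (∑ j, v j) + ((N:ℝ)/((N:ℝ)-1)) * v i := by
      intro i
      simp only [hL, Matrix.mulVec, dotProduct]
      have h1 : ∀ j, (if i = j then (1:ℝ) else -(1/((N:ℝ)-1))) * v j
          = (-(1/((N:ℝ)-1))) * v j + (if i = j then (1 + 1/((N:ℝ)-1)) * v j else 0) := by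
        intro j; by_cases h : i = j <;> simp [h] <;> ring
      rw [Finset.sum_congr rfl (fun j _ => h1 j), Finset.sum_add_distrib,
        Finset.sum_ite_eq, ← Finset.mul_sum]
      simp only [Finset.mem_univ, if_true]
      field_simp
      ring
    simp only [dotProduct, hmv]
    rw [Finset.sum_congr rfl (fun i (_ : i ∈ Finset.univ) =>
      (by ring : v i * ((-(1/((N:ℝ)-1))) * (∑ j, v j) + ((N:ℝ)/((N:ℝ)-1)) * v i)
        = (-(1/((N:ℝ)-1))) * (∑ j, v j) * v i + ((N:ℝ)/((N:ℝ)-1)) * (v i)^2)),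
      Finset.sum_add_distrib, ← Finset.mul_sum, ← Finset.mul_sum]
    field_simp
    ring
  -- quadratic form of P2
  have hPq : ∀ v : Fin N → ℝ, v ⬝ᵥ (P2 *ᵥ v) = (∑ i, (v i)^2) - (v 0)^2 := by
    intro v
    simp only [dotProduct, hP2, Matrix.mulVec_diagonal]
    rw [Finset.sum_congr rfl (fun i (_ : i ∈ Finset.univ) =>
      (show v i * ((if (i:ℕ) = 0 then (0:ℝ) else 1) * v i)
          = (v i)^2 - (if i = 0 then (v i)^2 else 0) by
        by_cases h : i = 0
        · subst h; simp
        · rw [if_neg (fun hc => h (by exact Fin.ext hc)), if_neg h]; ring)),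
      Finset.sum_sub_distrib, Finset.sum_ite_eq', if_pos (Finset.mem_univ _)]
  set S : ℝ := ∑ i, x i with hS
  have hSsq : S^2 = (N:ℝ) - ((N:ℝ)-1)*s := by
    have := hLq x
    rw [hx_s, hx_unit] at this
    field_simp at this
    linarith
  have hNS : (0:ℝ) < (N:ℝ) - S^2 := by
    rw [hSsq]
    have : 0 < ((N:ℝ)-1)*s := mul_pos hNR hs0
    linarith
  set D : ℝ := Real.sqrt (((N:ℝ)-1)*((N:ℝ) - S^2)) with hD
  have hD0 : 0 ≤ D := Real.sqrt_nonneg _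
  have hD2 : D^2 = ((N:ℝ)-1)*((N:ℝ) - S^2) :=
    Real.sq_sqrt (le_of_lt (mul_pos hNR hNS))
  -- any root of the quadratic gives a feasible vector, hence a bound
  have hroot : ∀ a : ℝ, (N:ℝ)*a^2 - 2*S*a + S^2 - ((N:ℝ)-1) = 0 → a^2 ≤ (x 0)^2 := by
    intro a ha
    set t : ℝ := (S - a)/((N:ℝ)-1) with ht
    set y : Fin N → ℝ := fun i => if i = 0 then a else t with hy
    have hyi : ∀ i : Fin N, y i = t + (if i = 0 then a - t else 0) := by
      intro i; by_cases h : i = 0 <;> simp [hy, h]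
    have hyi2 : ∀ i : Fin N, (y i)^2 = t^2 + (if i = 0 then a^2 - t^2 else 0) := by
      intro i; by_cases h : i = 0 <;> simp [hy, h]
    have hysum : ∑ i, y i = S := by
      rw [Finset.sum_congr rfl (fun i _ => hyi i), Finset.sum_add_distrib,
        Finset.sum_const, Finset.sum_ite_eq', if_pos (Finset.mem_univ _),
        Finset.card_univ, Fintype.card_fin, nsmul_eq_mul]
      rw [ht]
      field_simp
      ring
    have hysq : ∑ i, (y i)^2 = 1 := by
      rw [Finset.sum_congr rfl (fun i _ => hyi2 i), Finset.sum_add_distrib,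
        Finset.sum_const, Finset.sum_ite_eq', if_pos (Finset.mem_univ _),
        Finset.card_univ, Fintype.card_fin, nsmul_eq_mul]
      rw [ht]
      field_simp
      nlinarith [ha]
    have hys : y ⬝ᵥ (L *ᵥ y) = s := by
      rw [hLq, hysq, hysum, hSsq]
      field_simp
      ring
    have hmin := hx_min y hysq hys
    rw [hPq, hPq, hx_unit, hysq] at hmin
    have hy0 : y 0 = a := by simp [hy]
    rw [hy0] at hmin
    linarith
  -- Cauchy-Schwarz inequality for x over the tail
  set T : Finset (Fin N) := Finset.univ.erase 0 with hT
  have hTmem : ∀ i : Fin N, (i:ℕ) ≠ 0 → i ∈ T := by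
    intro i hi
    rw [hT, Finset.mem_erase]
    exact ⟨fun h => hi (by simp [h]), Finset.mem_univ _⟩
  have hTcard : (T.card : ℝ) = (N:ℝ) - 1 := by
    rw [hT, Finset.card_erase_of_mem (Finset.mem_univ _), Finset.card_univ, Fintype.card_fin]
    have : 1 ≤ N := by omega
    push_cast [Nat.cast_sub this]
    ring
  have hTsum : ∑ i ∈ T, x i = S - x 0 := by
    rw [hT, Finset.sum_erase_eq_sub (Finset.mem_univ _), hS]
  have hTsq : ∑ i ∈ T, (x i)^2 = 1 - (x 0)^2 := by
    rw [hT, Finset.sum_erase_eq_sub (Finset.mem_univ _), hx_unit]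
  have hkey := sum_sub_sq_aux T x
  rw [hTcard, hTsum, hTsq] at hkey
  have hnn : 0 ≤ ∑ i ∈ T, ∑ j ∈ T, (x i - x j)^2 :=
    Finset.sum_nonneg fun i _ => Finset.sum_nonneg fun j _ => sq_nonneg _
  have hq0 : (N:ℝ)*(x 0)^2 - 2*S*(x 0) + S^2 - ((N:ℝ)-1) ≤ 0 := by nlinarith [hkey, hnn]
  -- the two roots
  set ap : ℝ := (S + D)/(N:ℝ) with hap
  set am : ℝ := (S - D)/(N:ℝ) with ham
  have hfac : ∀ z : ℝ, (N:ℝ)*z^2 - 2*S*z + S^2 - ((N:ℝ)-1) = (N:ℝ)*(z - ap)*(z - am) := by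
    intro z
    rw [hap, ham]
    field_simp
    linear_combination hD2
  have hapr : (N:ℝ)*ap^2 - 2*S*ap + S^2 - ((N:ℝ)-1) = 0 := by
    rw [hfac]; ring
  have hamr : (N:ℝ)*am^2 - 2*S*am + S^2 - ((N:ℝ)-1) = 0 := by
    rw [hfac]; ring
  have hap2 := hroot ap hapr
  have ham2 := hroot am hamr
  have hle : am ≤ ap := by
    rw [hap, ham]
    gcongr
    linarith
  have hprod : (N:ℝ)*((x 0) - ap)*((x 0) - am) ≤ 0 := by rw [← hfac]; exact hq0
  -- x 0 is a root
  have heq0 : (N:ℝ)*(x 0)^2 - 2*S*(x 0) + S^2 - ((N:ℝ)-1) = 0 := by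
    rcases le_or_gt 0 (x 0) with h0 | h0
    · have h1 : x 0 ≤ ap := by
        by_contra h
        push_neg at h
        have h3 : 0 < x 0 - ap := by linarith
        have h4 : 0 < x 0 - am := by linarith
        have h5 := mul_pos (mul_pos hNpos h3) h4
        linarith
      have h2 : ap ≤ x 0 := by
        by_contra h
        push_neg at h
        have hap0 : 0 ≤ x 0 := h0
        have e3 : (x 0)^2 < ap^2 := pow_lt_pow_left₀ h h0 two_ne_zero
        linarith
      have : x 0 = ap := le_antisymm h1 h2
      rw [this]; exact hapr
    · have h1 : am ≤ x 0 := by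
        by_contra h
        push_neg at h
        have h3 : x 0 - ap < 0 := by linarith
        have h4 : x 0 - am < 0 := by linarith
        have h5 := mul_pos_of_neg_of_neg (mul_neg_of_pos_of_neg hNpos h3) h4
        linarith
      have h2 : x 0 ≤ am := by
        by_contra h
        push_neg at h
        have e3 : (x 0)^2 < am^2 := by
          have e4 := pow_lt_pow_left₀ (show -(x 0) < -am by linarith)
            (show (0:ℝ) ≤ -(x 0) by linarith) two_ne_zero
          simpa [neg_pow] using e4
        linarith
      have : x 0 = am := le_antisymm h2 h1
      rw [this]; exact hamr
  -- conclude equality case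
  have hzero : ∑ i ∈ T, ∑ j ∈ T, (x i - x j)^2 = 0 := by
    rw [hkey]; linarith [heq0]
  intro i j hi hj
  have hinner := (Finset.sum_eq_zero_iff_of_nonneg
    (fun i _ => Finset.sum_nonneg fun j _ => sq_nonneg (x i - x j))).mp hzero i (hTmem i hi)
  have := (Finset.sum_eq_zero_iff_of_nonneg
    (fun j _ => sq_nonneg (x i - x j))).mp hinner j (hTmem j hj)
  have := sq_eq_zero_iff.mp this
  linarith [this]
end

section
/- For the star graph on N vertices centered at u0, the spectral and graph spreads of the unit vector x(θ) = (cos θ, sin θ/√(N-1), …, sin θ/√(N-1)) are Δ_s² = 1 - sin 2θ and Δ_{g,u0}² = (1 - cos 2θ)/2, hence they satisfy (Δ_s² - 1)² + (2Δ_{g,u0}² - 1)² = 1; the lower envelope γ(s) = (1 - √(s(2-s)))/2 for 0 ≤ s ≤ 2 does not depend on N. -/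
open Matrix BigOperators Finset Real

section starAux
variable {N : ℕ}

lemma fin_val_zero_iff [NeZero N] (i : Fin N) : (i : ℕ) = 0 ↔ i = 0 :=
  ⟨fun h => Fin.ext (by simpa using h), fun h => by subst h; simp⟩

lemma star_quadL [NeZero N] (x : Fin N → ℝ) :
    x ⬝ᵥ ((fun (i j : Fin N) => if i = j then (1 : ℝ)
      else if (i : ℕ) = 0 ∨ (j : ℕ) = 0 then -(1 / Real.sqrt ((N : ℝ) - 1)) else 0) *ᵥ x)
    = (∑ i, x i ^ 2)
      - 2 * x 0 * ((∑ i, x i) - x 0) / Real.sqrt ((N : ℝ) - 1) := by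
  set r := Real.sqrt ((N : ℝ) - 1) with hr
  set T := ∑ i, x i with hT
  have inner : ∀ i : Fin N,
      (∑ j, (if i = j then (1 : ℝ)
        else if (i : ℕ) = 0 ∨ (j : ℕ) = 0 then -(1 / r) else 0) * x j)
      = x i - x 0 / r + (if i = 0 then 2 * x 0 / r - T / r else 0) := by
    intro i
    by_cases hi : i = 0
    · subst hi
      have h1 : ∀ j : Fin N, (if (0 : Fin N) = j then (1 : ℝ)
          else if ((0 : Fin N) : ℕ) = 0 ∨ (j : ℕ) = 0 then -(1 / r) else 0) * x j
          = -(1 / r) * x j + (if j = 0 then (1 + 1 / r) * x j else 0) := by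
        intro j
        by_cases hj : j = 0
        · subst hj; simp; ring
        · have h0 : ¬((0 : Fin N) = j) := fun h => hj h.symm
          simp [h0, hj]
      rw [Finset.sum_congr rfl (fun j _ => h1 j)]
      rw [Finset.sum_add_distrib, ← Finset.mul_sum]
      simp [Finset.sum_ite_eq', ← hT]
      ring
    · have hiv : ¬((i : ℕ) = 0) := fun h => hi ((fin_val_zero_iff i).mp h)
      have h1 : ∀ j : Fin N, (if i = j then (1 : ℝ)
          else if (i : ℕ) = 0 ∨ (j : ℕ) = 0 then -(1 / r) else 0) * x j
          = (if j = i then x j else 0) + (if j = 0 then -(1 / r) * x j else 0) := by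
        intro j
        by_cases hj : j = i
        · subst hj; simp [hiv, hi]
        · have h0 : ¬(i = j) := fun h => hj h.symm
          by_cases hj0 : j = 0
          · subst hj0; simp [h0, hj]
          · have hjv : ¬((j : ℕ) = 0) := fun h => hj0 ((fin_val_zero_iff j).mp h)
            simp [h0, hj, hj0, hiv, hjv]
      rw [Finset.sum_congr rfl (fun j _ => h1 j)]
      rw [Finset.sum_add_distrib]
      simp [Finset.sum_ite_eq', hi]
      ring
  have expand : x ⬝ᵥ ((fun (i j : Fin N) => if i = j then (1 : ℝ)
      else if (i : ℕ) = 0 ∨ (j : ℕ) = 0 then -(1 / r) else 0) *ᵥ x)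
      = ∑ i, x i * (x i - x 0 / r + (if i = 0 then 2 * x 0 / r - T / r else 0)) := by
    refine Finset.sum_congr rfl fun i _ => ?_
    rw [← inner i]
    rfl
  rw [expand]
  have key : ∀ i : Fin N, x i * (x i - x 0 / r + (if i = 0 then 2 * x 0 / r - T / r else 0))
      = (x i ^ 2 - x i * x 0 / r) + (if i = 0 then x i * (2 * x 0 / r - T / r) else 0) := by
    intro i; by_cases hi : i = 0 <;> simp [hi] <;> ring
  rw [Finset.sum_congr rfl (fun i _ => key i), Finset.sum_add_distrib]
  rw [Finset.sum_ite_eq']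
  simp [Finset.sum_sub_distrib, ← Finset.sum_div, ← Finset.sum_mul, ← hT]
  ring

lemma star_quadP [NeZero N] (x : Fin N → ℝ) :
    x ⬝ᵥ ((Matrix.diagonal (fun i : Fin N => if (i : ℕ) = 0 then (0 : ℝ) else 1)) *ᵥ x)
    = (∑ i, x i ^ 2) - x 0 ^ 2 := by
  have : ∀ i : Fin N, x i * ((Matrix.diagonal
      (fun i : Fin N => if (i : ℕ) = 0 then (0 : ℝ) else 1)) *ᵥ x) i
      = x i ^ 2 - (if i = 0 then x i ^ 2 else 0) := by
    intro i
    rw [Matrix.mulVec_diagonal]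
    by_cases hi : i = 0
    · subst hi; simp
    · have hiv : ¬((i : ℕ) = 0) := fun h => hi ((fin_val_zero_iff i).mp h)
      simp [hi, hiv]; ring
  show (∑ i, x i * _) = _
  rw [Finset.sum_congr rfl (fun i _ => this i), Finset.sum_sub_distrib,
    Finset.sum_ite_eq']
  simp

end starAux

section starAux2
variable {N : ℕ}

lemma star_sum_if (hN : 2 ≤ N) (a b : ℝ) :
    ∑ i : Fin N, (if (i : ℕ) = 0 then a else b) = a + ((N : ℝ) - 1) * b := by
  haveI : NeZero N := ⟨by omega⟩
  rw [← Finset.add_sum_erase _ _ (Finset.mem_univ (0 : Fin N))]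
  have h1 : ∀ i ∈ Finset.univ.erase (0 : Fin N),
      (if (i : ℕ) = 0 then a else b) = b := by
    intro i hi
    have : i ≠ 0 := (Finset.mem_erase.mp hi).1
    have : ¬((i : ℕ) = 0) := fun h => this ((fin_val_zero_iff i).mp h)
    simp [this]
  rw [Finset.sum_congr rfl h1, Finset.sum_const, Finset.card_erase_of_mem (Finset.mem_univ _)]
  simp only [Finset.card_univ, Fintype.card_fin, nsmul_eq_mul]
  have : ((N - 1 : ℕ) : ℝ) = (N : ℝ) - 1 := by
    have : 1 ≤ N := by omega
    push_cast [this]; ring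
  rw [this]
  simp

lemma star_theta (hN : 2 ≤ N) (θ : ℝ) :
    (∑ i : Fin N, (if (i : ℕ) = 0 then Real.cos θ
        else Real.sin θ / Real.sqrt ((N : ℝ) - 1)) ^ 2 = 1) ∧
    ((fun i : Fin N => if (i : ℕ) = 0 then Real.cos θ
        else Real.sin θ / Real.sqrt ((N : ℝ) - 1)) ⬝ᵥ
      ((fun (i j : Fin N) => if i = j then (1 : ℝ)
        else if (i : ℕ) = 0 ∨ (j : ℕ) = 0 then -(1 / Real.sqrt ((N : ℝ) - 1)) else 0) *ᵥ
        (fun i : Fin N => if (i : ℕ) = 0 then Real.cos θ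
          else Real.sin θ / Real.sqrt ((N : ℝ) - 1)))
      = 1 - Real.sin (2 * θ)) ∧
    ((fun i : Fin N => if (i : ℕ) = 0 then Real.cos θ
        else Real.sin θ / Real.sqrt ((N : ℝ) - 1)) ⬝ᵥ
      ((Matrix.diagonal (fun i : Fin N => if (i : ℕ) = 0 then (0 : ℝ) else 1)) *ᵥ
        (fun i : Fin N => if (i : ℕ) = 0 then Real.cos θ
          else Real.sin θ / Real.sqrt ((N : ℝ) - 1)))
      = (1 - Real.cos (2 * θ)) / 2) := by
  haveI : NeZero N := ⟨by omega⟩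
  set r := Real.sqrt ((N : ℝ) - 1) with hr
  have hN1 : (1 : ℝ) ≤ (N : ℝ) - 1 := by
    have : (2 : ℝ) ≤ (N : ℝ) := by exact_mod_cast hN
    linarith
  have hr2 : r ^ 2 = (N : ℝ) - 1 := Real.sq_sqrt (by linarith)
  have hrpos : 0 < r := Real.sqrt_pos.mpr (by linarith)
  have hrne : r ≠ 0 := ne_of_gt hrpos
  set x : Fin N → ℝ := fun i => if (i : ℕ) = 0 then Real.cos θ else Real.sin θ / r with hx
  have hx0 : x 0 = Real.cos θ := by simp [hx]
  have hQ : ∑ i, x i ^ 2 = 1 := by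
    have : ∀ i : Fin N, x i ^ 2
        = (if (i : ℕ) = 0 then Real.cos θ ^ 2 else (Real.sin θ / r) ^ 2) := by
      intro i; simp only [hx]; split_ifs <;> rfl
    rw [Finset.sum_congr rfl (fun i _ => this i), star_sum_if hN]
    rw [div_pow, ← hr2]
    field_simp
    exact Real.cos_sq_add_sin_sq θ

  have hT : (∑ i, x i) - x 0 = ((N : ℝ) - 1) * (Real.sin θ / r) := by
    rw [hx0]
    have : ∑ i, x i = Real.cos θ + ((N : ℝ) - 1) * (Real.sin θ / r) := star_sum_if hN _ _
    rw [this]; ring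
  refine ⟨hQ, ?_, ?_⟩
  · rw [star_quadL, hQ, hT, hx0]
    have : 2 * Real.cos θ * (((N : ℝ) - 1) * (Real.sin θ / r)) / r
        = 2 * Real.sin θ * Real.cos θ * (((N : ℝ) - 1) / r ^ 2) := by ring
    rw [this, hr2, div_self (by linarith), mul_one, Real.sin_two_mul]
  · rw [star_quadP, hQ, hx0, Real.cos_two_mul]
    ring

end starAux2


set_option maxHeartbeats 1000000 in
/-- For the star graph on `N ≥ 2` vertices centered at vertex `0`, the unit vectors
`x(θ) = (cos θ, sin θ/√(N-1), …)` have spectral spread `1 - sin 2θ` and graph spread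
`(1 - cos 2θ)/2`, hence satisfy `(Δs-1)² + (2Δg-1)² = 1`; moreover the lower envelope
`γ(s) = (1 - √(s(2-s)))/2` for `0 ≤ s ≤ 2` does not depend on `N`. -/
theorem stmt13 {N : ℕ} (hN : 2 ≤ N)
    (L : Matrix (Fin N) (Fin N) ℝ)
    (hL : L = fun (i j : Fin N) => if i = j then (1 : ℝ)
      else if (i : ℕ) = 0 ∨ (j : ℕ) = 0 then -(1 / Real.sqrt ((N : ℝ) - 1)) else 0)
    (P2 : Matrix (Fin N) (Fin N) ℝ)
    (hP2 : P2 = Matrix.diagonal (fun i : Fin N => if (i : ℕ) = 0 then (0 : ℝ) else 1)) :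
    (∀ θ : ℝ,
      let x : Fin N → ℝ := fun i =>
        if (i : ℕ) = 0 then Real.cos θ else Real.sin θ / Real.sqrt ((N : ℝ) - 1)
      let Δs : ℝ := x ⬝ᵥ (L *ᵥ x)
      let Δg : ℝ := x ⬝ᵥ (P2 *ᵥ x)
      Δs = 1 - Real.sin (2 * θ) ∧
      Δg = (1 - Real.cos (2 * θ)) / 2 ∧
      (Δs - 1) ^ 2 + (2 * Δg - 1) ^ 2 = 1) ∧
    (∀ s : ℝ, 0 ≤ s → s ≤ 2 →
      IsLeast {g : ℝ | ∃ x : Fin N → ℝ, (∑ i, (x i) ^ 2 = 1) ∧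
          x ⬝ᵥ (L *ᵥ x) = s ∧ g = x ⬝ᵥ (P2 *ᵥ x)}
        ((1 - Real.sqrt (s * (2 - s))) / 2)) := by
  haveI : NeZero N := ⟨by omega⟩
  subst hL hP2
  have hN1 : (1 : ℝ) ≤ (N : ℝ) - 1 := by
    have : (2 : ℝ) ≤ (N : ℝ) := by exact_mod_cast hN
    linarith
  set r := Real.sqrt ((N : ℝ) - 1) with hr
  have hr2 : r ^ 2 = (N : ℝ) - 1 := Real.sq_sqrt (by linarith)
  have hrpos : 0 < r := Real.sqrt_pos.mpr (by linarith)
  constructor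
  · intro θ
    obtain ⟨hQ, hs, hg⟩ := star_theta hN θ
    refine ⟨hs, hg, ?_⟩
    rw [hs, hg]
    have := Real.sin_sq_add_cos_sq (2 * θ)
    nlinarith [this]
  · intro s hs0 hs2
    have hsq : 0 ≤ s * (2 - s) := by nlinarith
    have ht0 : 0 ≤ Real.sqrt (s * (2 - s)) := Real.sqrt_nonneg _
    have ht2 : Real.sqrt (s * (2 - s)) ^ 2 = s * (2 - s) := Real.sq_sqrt hsq
    constructor
    · -- membership
      set θ := Real.arcsin (1 - s) / 2 with hθ
      have h2θ : 2 * θ = Real.arcsin (1 - s) := by rw [hθ]; ring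
      have hb1 : -1 ≤ 1 - s := by linarith
      have hb2 : 1 - s ≤ 1 := by linarith
      have hsin : Real.sin (2 * θ) = 1 - s := by
        rw [h2θ, Real.sin_arcsin hb1 hb2]
      have hcos : Real.cos (2 * θ) = Real.sqrt (s * (2 - s)) := by
        rw [h2θ, Real.cos_arcsin]
        congr 1
        ring
      obtain ⟨hQ, hsv, hgv⟩ := star_theta hN θ
      refine ⟨fun i => if (i : ℕ) = 0 then Real.cos θ else Real.sin θ / r, hQ, ?_, ?_⟩
      · rw [hsv, hsin]; ring
      · rw [hgv, hcos]
    · -- lower bound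
      rintro g ⟨x, hQ, hsx, hgx⟩
      rw [star_quadL] at hsx
      rw [star_quadP] at hgx
      rw [hQ] at hsx hgx
      set a := x 0 with ha
      have herase : ∑ i ∈ Finset.univ.erase (0 : Fin N), x i ^ 2 = 1 - a ^ 2 := by
        have h : x 0 ^ 2 + ∑ i ∈ Finset.univ.erase (0 : Fin N), x i ^ 2 = 1 := by
          rw [← hQ]
          exact Finset.add_sum_erase _ (fun i => x i ^ 2) (Finset.mem_univ _)
        linarith [h]
      have hSsum : (∑ i, x i) - a = ∑ i ∈ Finset.univ.erase (0 : Fin N), x i := by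
        have h := Finset.add_sum_erase Finset.univ x (Finset.mem_univ (0 : Fin N))
        linarith [h]
      have hCS : ((∑ i, x i) - a) ^ 2 ≤ ((N : ℝ) - 1) * (1 - a ^ 2) := by
        rw [hSsum, ← herase]
        have h := sq_sum_le_card_mul_sum_sq
          (s := Finset.univ.erase (0 : Fin N)) (f := x)
        have hcard : ((Finset.univ.erase (0 : Fin N)).card : ℝ) = (N : ℝ) - 1 := by
          rw [Finset.card_erase_of_mem (Finset.mem_univ _)]
          simp only [Finset.card_univ, Fintype.card_fin]
          have h1 : 1 ≤ N := by omega
          push_cast [h1]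
          ring
        calc ((∑ i ∈ Finset.univ.erase (0 : Fin N), x i)) ^ 2
            ≤ ((Finset.univ.erase (0 : Fin N)).card : ℝ)
              * ∑ i ∈ Finset.univ.erase (0 : Fin N), x i ^ 2 := by exact_mod_cast h
          _ = ((N : ℝ) - 1) * ∑ i ∈ Finset.univ.erase (0 : Fin N), x i ^ 2 := by rw [hcard]
      have hg1 : g = 1 - a ^ 2 := hgx
      have ha1 : a ^ 2 ≤ 1 := by
        have h : x 0 ^ 2 ≤ ∑ i, x i ^ 2 := Finset.single_le_sum (f := fun i => x i ^ 2)
          (fun i _ => sq_nonneg (x i)) (Finset.mem_univ (0 : Fin N))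
        rw [hQ] at h
        exact h
      -- from hsx : 1 - 2*a*((∑ x i) - a)/r = s
      have hkey : (1 - s) * r = 2 * a * ((∑ i, x i) - a) := by
        have hrne : r ≠ 0 := ne_of_gt hrpos
        field_simp at hsx
        linarith [hsx]
      have hineq : (1 - s) ^ 2 ≤ 4 * (1 - a ^ 2) * a ^ 2 := by
        have h1 : (1 - s) ^ 2 * ((N : ℝ) - 1)
            = 4 * a ^ 2 * ((∑ i, x i) - a) ^ 2 := by
          have := congrArg (fun z => z ^ 2) hkey
          nlinarith [this, hr2]
        have h2 : 4 * a ^ 2 * ((∑ i, x i) - a) ^ 2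
            ≤ 4 * a ^ 2 * (((N : ℝ) - 1) * (1 - a ^ 2)) := by
          have := sq_nonneg a
          nlinarith [hCS, sq_nonneg a]
        have h3 : (1 - s) ^ 2 * ((N : ℝ) - 1) ≤ 4 * a ^ 2 * (((N : ℝ) - 1) * (1 - a ^ 2)) :=
          h1 ▸ h2
        nlinarith [h3, hN1]
      rw [hg1]
      nlinarith [hineq, ht0, ht2, sq_nonneg (2 * (1 - a ^ 2) - 1 + Real.sqrt (s * (2 - s))), ha1]
end

section
/- For the diffusion x(t) = e^{-tL}δ_{u0} on the complete graph on N vertices, x(t) = (1/N)[1 + (N-1)e^{-λ₂t}, 1 - e^{-λ₂t}, …, 1 - e^{-λ₂t}]^T with λ₂ = N/(N-1), and the resulting spreads Δ_s²(x(t)) = N e^{-2λ₂t}/(1 + (N-1)e^{-2λ₂t}) and Δ_{g,u0}²(x(t)) = ((N-1)/N)(1 - e^{-λ₂t})²/(1 + (N-1)e^{-2λ₂t}) satisfy the complete-graph uncertainty ellipse (2g - 1)² + (N-1)(s + (N-2)g/(N-1) - 1)² = 1 for all t ≥ 0. -/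
open Matrix BigOperators Finset Real

lemma exp_mulVec_eigen {N : ℕ} (A : Matrix (Fin N) (Fin N) ℝ) (w : Fin N → ℝ) (μ : ℝ)
    (h : A *ᵥ w = μ • w) : (NormedSpace.exp A) *ᵥ w = Real.exp μ • w := by
  letI : SeminormedRing (Matrix (Fin N) (Fin N) ℝ) := Matrix.linftyOpSemiNormedRing
  letI : NormedRing (Matrix (Fin N) (Fin N) ℝ) := Matrix.linftyOpNormedRing
  letI : NormedAlgebra ℝ (Matrix (Fin N) (Fin N) ℝ) := Matrix.linftyOpNormedAlgebra
  have hpow : ∀ n : ℕ, A ^ n *ᵥ w = μ ^ n • w := by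
    intro n
    induction n with
    | zero => simp
    | succ n ih =>
      rw [pow_succ, ← Matrix.mulVec_mulVec, h, Matrix.mulVec_smul, ih, smul_smul, ← pow_succ']
  let f : Matrix (Fin N) (Fin N) ℝ →ₗ[ℝ] (Fin N → ℝ) :=
    { toFun := fun M => M *ᵥ w
      map_add' := fun M M' => Matrix.add_mulVec M M' w
      map_smul' := fun c M => Matrix.smul_mulVec c M w }
  let F := LinearMap.toContinuousLinearMap f
  have hF : ∀ M, F M = M *ᵥ w := fun _ => rfl
  rw [NormedSpace.exp_eq_tsum ℝ, ← hF,
    ContinuousLinearMap.map_tsum F (NormedSpace.expSeries_summable' A)]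
  have : ∀ n : ℕ, F (((n.factorial : ℝ))⁻¹ • A ^ n) = (μ ^ n / n.factorial) • w := by
    intro n
    rw [_root_.map_smul, hF, hpow, smul_smul, div_eq_inv_mul]
  rw [tsum_congr this, (Real.summable_pow_div_factorial μ).tsum_smul_const]
  rw [Real.exp_eq_exp_ℝ, NormedSpace.exp_eq_tsum_div]

lemma sum_if_eq {N : ℕ} (i0 : Fin N) (f : Fin N → ℝ) (a b : ℝ)
    (hf : ∀ i : Fin N, f i = if i = i0 then a else b) :
    ∑ i, f i = a + ((N : ℝ) - 1) * b := by
  have h : ∀ i : Fin N, f i = b + if i = i0 then a - b else 0 := by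
    intro i
    rw [hf i]
    by_cases h : i = i0 <;> simp [h]
  simp_rw [h]
  rw [Finset.sum_add_distrib, Finset.sum_const,
    Finset.sum_ite_eq' Finset.univ i0 (fun _ => a - b),
    if_pos (Finset.mem_univ _)]
  simp only [Finset.card_univ, Fintype.card_fin, nsmul_eq_mul]
  ring

/-- For the diffusion `x(t) = e^{-tL} δ_{u0}` on the complete graph on `N` vertices
(`u0` = vertex 0), `x(t) = (1/N)[1+(N-1)e^{-λ₂t}, 1-e^{-λ₂t}, …]` with `λ₂ = N/(N-1)`,
the spreads are `Δs = N e^{-2λ₂t}/(1+(N-1)e^{-2λ₂t})` and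
`Δg = ((N-1)/N)(1-e^{-λ₂t})²/(1+(N-1)e^{-2λ₂t})`, and they satisfy the complete-graph
uncertainty ellipse `(2g-1)² + (N-1)(s + (N-2)g/(N-1) - 1)² = 1` for all `t ≥ 0`. -/
theorem stmt16 {N : ℕ} (hN : 2 ≤ N)
    (L : Matrix (Fin N) (Fin N) ℝ)
    (hL : L = fun (i j : Fin N) => if i = j then (1 : ℝ) else -(1 / ((N : ℝ) - 1)))
    (P2 : Matrix (Fin N) (Fin N) ℝ)
    (hP2 : P2 = Matrix.diagonal (fun i : Fin N => if (i : ℕ) = 0 then (0 : ℝ) else 1))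
    (u0 : Fin N) (hu0 : (u0 : ℕ) = 0)
    (δ : Fin N → ℝ) (hδ : δ = Pi.single u0 1)
    (x : ℝ → Fin N → ℝ)
    (hx : ∀ t : ℝ, x t = (NormedSpace.exp ((-t) • L)) *ᵥ δ)
    (lam2 : ℝ) (hlam2 : lam2 = (N : ℝ) / ((N : ℝ) - 1)) :
    ∀ t : ℝ, 0 ≤ t →
      (x t = fun i : Fin N => if (i : ℕ) = 0
          then (1 + ((N : ℝ) - 1) * Real.exp (-lam2 * t)) / (N : ℝ)
          else (1 - Real.exp (-lam2 * t)) / (N : ℝ)) ∧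
      (x t ⬝ᵥ (L *ᵥ x t)) / (∑ i, (x t i) ^ 2) =
        (N : ℝ) * Real.exp (-2 * lam2 * t) /
          (1 + ((N : ℝ) - 1) * Real.exp (-2 * lam2 * t)) ∧
      (x t ⬝ᵥ (P2 *ᵥ x t)) / (∑ i, (x t i) ^ 2) =
        (((N : ℝ) - 1) / (N : ℝ)) * (1 - Real.exp (-lam2 * t)) ^ 2 /
          (1 + ((N : ℝ) - 1) * Real.exp (-2 * lam2 * t)) ∧
      (let s : ℝ := (x t ⬝ᵥ (L *ᵥ x t)) / (∑ i, (x t i) ^ 2)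
       let g : ℝ := (x t ⬝ᵥ (P2 *ᵥ x t)) / (∑ i, (x t i) ^ 2)
       (2 * g - 1) ^ 2 +
         ((N : ℝ) - 1) * (s + ((N : ℝ) - 2) * g / ((N : ℝ) - 1) - 1) ^ 2 = 1) := by
  intro t _
  have hN0 : 0 < N := by omega
  have hc2 : (2 : ℝ) ≤ (N : ℝ) := by exact_mod_cast hN
  have hc0 : (N : ℝ) ≠ 0 := by positivity
  have hc1' : (0 : ℝ) < (N : ℝ) - 1 := by nlinarith
  have hc1 : (N : ℝ) - 1 ≠ 0 := ne_of_gt hc1'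
  set e : ℝ := Real.exp (-lam2 * t) with he
  have he0 : 0 < e := Real.exp_pos _
  have hE : Real.exp (-2 * lam2 * t) = e ^ 2 := by
    rw [he, ← Real.exp_nat_mul]
    congr 1
    push_cast
    ring
  set i0 : Fin N := ⟨0, hN0⟩ with hi0
  have hiff : ∀ i : Fin N, i = i0 ↔ (i : ℕ) = 0 := by
    intro i; simp [hi0, Fin.ext_iff]
  -- eigenvectors
  set v1 : Fin N → ℝ := fun _ => 1 / (N : ℝ) with hv1
  set v2 : Fin N → ℝ := fun i => (if (i : ℕ) = 0 then 1 else 0) - 1 / (N : ℝ) with hv2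
  have hu0' : u0 = i0 := (hiff u0).mpr hu0
  have hLv1 : L *ᵥ v1 = (0 : ℝ) • v1 := by
    funext i
    show ∑ j, L i j * v1 j = _
    rw [sum_if_eq i (fun j => L i j * v1 j) (1 / (N : ℝ))
      (-(1 / ((N : ℝ) - 1)) * (1 / (N : ℝ)))
      (by
        intro j
        by_cases h : j = i
        · subst h; simp [hL, hv1]
        · simp only [hL, hv1]
          rw [if_neg (fun hh : i = j => h hh.symm)]
          rw [if_neg h])]
    simp only [Pi.smul_apply, zero_smul]
    field_simp
    ring
  have hLv2 : L *ᵥ v2 = lam2 • v2 := by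
    have hv2' : v2 = Pi.single i0 1 - v1 := by
      funext i
      by_cases h : (i : ℕ) = 0 <;>
        simp [hv2, hv1, Pi.single_apply, hiff i, h]
    rw [show L *ᵥ v2 = L *ᵥ (Pi.single i0 1 - v1) from by rw [← hv2']]
    rw [Matrix.mulVec_sub, hLv1, zero_smul, sub_zero, Matrix.mulVec_single]
    funext i
    show L i i0 * 1 = lam2 * v2 i
    by_cases h : (i : ℕ) = 0
    · have : i = i0 := (hiff i).mpr h
      subst this
      simp only [hL, if_pos rfl, hv2, h, if_pos rfl, hlam2]
      field_simp
      try ring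
      simp
    · have hne : i ≠ i0 := fun hh => h ((hiff i).mp hh)
      simp only [hL, if_neg hne, hv2, h, if_neg h, hlam2]
      field_simp
      try ring
      simp
  have hA1 : ((-t) • L) *ᵥ v1 = (0 : ℝ) • v1 := by
    rw [Matrix.smul_mulVec, hLv1]
    simp
  have hA2 : ((-t) • L) *ᵥ v2 = (-lam2 * t) • v2 := by
    rw [Matrix.smul_mulVec, hLv2, smul_smul]
    congr 1
    ring
  have hδ' : δ = v1 + v2 := by
    rw [hδ, hu0']
    funext i
    by_cases h : (i : ℕ) = 0 <;>
      simp [Pi.single_apply, hiff i, h, hv1, hv2]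
  have hxe : x t = v1 + e • v2 := by
    rw [hx t, hδ', Matrix.mulVec_add, exp_mulVec_eigen _ _ _ hA1,
      exp_mulVec_eigen _ _ _ hA2, Real.exp_zero, one_smul, he]
  have hX : x t = fun i : Fin N => if (i : ℕ) = 0
      then (1 + ((N : ℝ) - 1) * e) / (N : ℝ)
      else (1 - e) / (N : ℝ) := by
    rw [hxe]
    funext i
    by_cases h : (i : ℕ) = 0 <;>
      · simp only [Pi.add_apply, Pi.smul_apply, hv1, hv2, h, if_pos, if_neg,
          smul_eq_mul, ite_true, ite_false]
        field_simp
        try ring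
  have hxi : ∀ i : Fin N, x t i = if (i : ℕ) = 0
      then (1 + ((N : ℝ) - 1) * e) / (N : ℝ) else (1 - e) / (N : ℝ) := by
    intro i; rw [hX]
  -- the sum of squares
  have hS : ∑ i, (x t i) ^ 2 = (1 + ((N : ℝ) - 1) * e ^ 2) / (N : ℝ) := by
    rw [sum_if_eq i0 (fun i => (x t i) ^ 2)
      (((1 + ((N : ℝ) - 1) * e) / (N : ℝ)) ^ 2) (((1 - e) / (N : ℝ)) ^ 2)
      (by
        intro i
        simp only [hxi]
        by_cases h : (i : ℕ) = 0 <;> simp [h, (hiff i), if_pos, if_neg])]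
    field_simp
    ring
  have hS' : ∑ i, (x t i) ^ 2 ≠ 0 := by
    rw [hS]; positivity
  have hD : (0 : ℝ) < 1 + ((N : ℝ) - 1) * e ^ 2 := by positivity
  -- numerator for s
  have hLx : L *ᵥ x t = (e * lam2) • v2 := by
    rw [hxe, Matrix.mulVec_add, Matrix.mulVec_smul, hLv1, hLv2, zero_smul,
      zero_add, smul_smul]
  have hNumL : x t ⬝ᵥ (L *ᵥ x t) = e ^ 2 := by
    rw [hLx]
    have hdot : x t ⬝ᵥ v2 = ((N : ℝ) - 1) * e / (N : ℝ) := by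
      show ∑ i, x t i * v2 i = _
      rw [sum_if_eq i0 (fun i => x t i * v2 i)
        ((1 + ((N : ℝ) - 1) * e) / (N : ℝ) * (1 - 1 / (N : ℝ)))
        ((1 - e) / (N : ℝ) * (-(1 / (N : ℝ))))
        (by
          intro i
          simp only [hxi]
          by_cases h : (i : ℕ) = 0 <;>
            simp [h, (hiff i), hv2] <;> ring)]
      field_simp
      ring
    rw [dotProduct_smul, smul_eq_mul, hdot, hlam2]
    field_simp
    try ring
  -- numerator for g
  have hNumG : x t ⬝ᵥ (P2 *ᵥ x t) =
      ((N : ℝ) - 1) * (1 - e) ^ 2 / (N : ℝ) ^ 2 := by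
    show ∑ i, x t i * (P2 *ᵥ x t) i = _
    rw [sum_if_eq i0 (fun i => x t i * (P2 *ᵥ x t) i) 0 (((1 - e) / (N : ℝ)) ^ 2)
      (by
        intro i
        show x t i * (P2 *ᵥ x t) i = _
        rw [hP2, Matrix.mulVec_diagonal, hxi i]
        by_cases h : (i : ℕ) = 0 <;> simp [h, (hiff i)] <;> ring)]
    field_simp
    try ring
  have h2 : (x t ⬝ᵥ (L *ᵥ x t)) / (∑ i, (x t i) ^ 2) =
      (N : ℝ) * Real.exp (-2 * lam2 * t) /
        (1 + ((N : ℝ) - 1) * Real.exp (-2 * lam2 * t)) := by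
    rw [hNumL, hS, hE]
    field_simp
    try ring
  have h3 : (x t ⬝ᵥ (P2 *ᵥ x t)) / (∑ i, (x t i) ^ 2) =
      (((N : ℝ) - 1) / (N : ℝ)) * (1 - e) ^ 2 /
        (1 + ((N : ℝ) - 1) * Real.exp (-2 * lam2 * t)) := by
    rw [hNumG, hS, hE]
    field_simp
    try ring
  refine ⟨hX, h2, h3, ?_⟩
  simp only [h2, h3, hE]
  have hD' : 1 + ((N : ℝ) - 1) * e ^ 2 ≠ 0 := ne_of_gt hD
  field_simp
  ring
end

section
/- Let x(t) = e^{-tL}δ_{u0} and g_d(t) = x(t)^T P² x(t)/‖x(t)‖². Then ġ_d(0) = 0 and g̈_d(0) = 2 δ_{u0}^T L P² L δ_{u0} = 2 Σ_{v∼u0} d(v,u0)²/(deg(u0) deg(v)), using that P² δ_{u0} = 0 and (L δ_{u0})_v = -1/√(deg(u0)deg(v)) for v ∼ u0. -/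
open Matrix BigOperators Finset Real

lemma auxExpDeriv {V : Type*} [Fintype V] [DecidableEq V]
    (A : Matrix V V ℝ) (c : V → ℝ) (v : V) (t : ℝ) :
    HasDerivAt (fun s : ℝ => (NormedSpace.exp (s • A) *ᵥ c) v)
      ((NormedSpace.exp (t • A) *ᵥ (A *ᵥ c)) v) t := by
  letI : SeminormedRing (Matrix V V ℝ) := Matrix.linftyOpSemiNormedRing
  letI : NormedRing (Matrix V V ℝ) := Matrix.linftyOpNormedRing
  letI : NormedAlgebra ℝ (Matrix V V ℝ) := Matrix.linftyOpNormedAlgebra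
  have h := hasDerivAt_exp_smul_const (𝕂 := ℝ) A t
  have lin : IsLinearMap ℝ (fun M : Matrix V V ℝ => (M *ᵥ c) v) :=
    ⟨fun M N => by simp [Matrix.add_mulVec], fun r M => by simp [Matrix.smul_mulVec]⟩
  let f : Matrix V V ℝ →L[ℝ] ℝ := LinearMap.toContinuousLinearMap (IsLinearMap.mk' _ lin)
  have h2 := f.hasFDerivAt.comp_hasDerivAt t h
  have : f (NormedSpace.exp (t • A) * A) = (NormedSpace.exp (t • A) *ᵥ (A *ᵥ c)) v := by
    show ((NormedSpace.exp (t • A) * A) *ᵥ c) v = _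
    rw [← Matrix.mulVec_mulVec]
  exact h2.congr_deriv this

lemma auxExpUnit {V : Type*} [Fintype V] [DecidableEq V]
    (B : Matrix V V ℝ) : NormedSpace.exp (-B) * NormedSpace.exp B = 1 := by
  have h := Matrix.exp_add_of_commute (-B) B (Commute.neg_left (Commute.refl B))
  rw [neg_add_cancel, NormedSpace.exp_zero] at h
  exact h.symm

/-- For the graph spread `g_d(t) = x(t)ᵀP²x(t)/‖x(t)‖²` of the heat diffusion
`x(t) = e^{-tL}δ_{u0}`: one has `(Lδ_{u0})_v = -1/√(deg u0 · deg v)` for `v ∼ u0`,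
`ġ_d(0) = 0`, and `g̈_d(0) = 2 δᵀ L P² L δ = 2 Σ_{v∼u0} d(v,u0)²/(deg u0 · deg v)`. -/
theorem stmt19 {V : Type*} [Fintype V] [DecidableEq V]
    (G : SimpleGraph V) [DecidableRel G.Adj] (hconn : G.Connected)
    (d : V → V → ℝ)
    (hd_nonneg : ∀ u v, 0 ≤ d u v)
    (hd_eq_zero : ∀ u v, d u v = 0 ↔ u = v)
    (hd_symm : ∀ u v, d u v = d v u)
    (u0 : V)
    (P2 : Matrix V V ℝ) (hP2 : P2 = Matrix.diagonal (fun v => (d u0 v) ^ 2))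
    (δ : V → ℝ) (hδ : δ = Pi.single u0 1)
    (x : ℝ → V → ℝ)
    (hx : ∀ t : ℝ, x t = (NormedSpace.exp ((-t) • normLap G)) *ᵥ δ)
    (gd : ℝ → ℝ)
    (hgd : ∀ t : ℝ, gd t = (x t ⬝ᵥ (P2 *ᵥ x t)) / (∑ v : V, (x t v) ^ 2)) :
    (∀ v : V, G.Adj u0 v →
      (normLap G *ᵥ δ) v =
        -(1 / (Real.sqrt (G.degree u0) * Real.sqrt (G.degree v)))) ∧
    deriv gd 0 = 0 ∧
    deriv (deriv gd) 0 = 2 * (δ ⬝ᵥ (normLap G *ᵥ (P2 *ᵥ (normLap G *ᵥ δ)))) ∧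
    deriv (deriv gd) 0 =
      2 * ∑ v ∈ G.neighborFinset u0,
        (d u0 v) ^ 2 / ((G.degree u0 : ℝ) * (G.degree v : ℝ)) := by
  classical
  set L : Matrix V V ℝ := normLap G with hL
  -- basic facts about δ
  have hδu0 : δ u0 = 1 := by simp [hδ]
  have hδne : ∀ v, v ≠ u0 → δ v = 0 := fun v hv => by simp [hδ, Pi.single_eq_of_ne hv]
  have hd00 : d u0 u0 = 0 := (hd_eq_zero u0 u0).mpr rfl
  -- symmetry of L
  have hLsymm : ∀ i j, L i j = L j i := by
    intro i j
    simp only [hL, normLap]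
    by_cases h : i = j
    · subst h; rfl
    · rw [if_neg h, if_neg (Ne.symm h)]
      by_cases ha : G.Adj i j
      · rw [if_pos ha, if_pos ha.symm, mul_comm]
      · rw [if_neg ha, if_neg (fun hh => ha hh.symm)]
  -- (L δ) v = L v u0
  have hLdelta : ∀ v, (L *ᵥ δ) v = L v u0 := by
    intro v; rw [hδ]; simp
  -- part 1
  have part1 : ∀ v : V, G.Adj u0 v → (L *ᵥ δ) v =
      -(1 / (Real.sqrt (G.degree u0) * Real.sqrt (G.degree v))) := by
    intro v hadj
    rw [hLdelta]
    show (if v = u0 then (1:ℝ) else 0) -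
      (if G.Adj v u0 then 1 / (Real.sqrt (G.degree v) * Real.sqrt (G.degree u0)) else 0) = _
    rw [if_neg hadj.ne', if_pos hadj.symm, zero_sub,
      mul_comm (Real.sqrt (G.degree v)) (Real.sqrt (G.degree u0))]
  -- diagonal of L at u0
  have hLu0u0 : L u0 u0 = 1 := by
    show (if u0 = u0 then (1:ℝ) else 0) - (if G.Adj u0 u0 then _ else 0) = 1
    rw [if_pos rfl, if_neg (G.irrefl), sub_zero]
  -- off entries of L for non-adjacent, distinct
  have hLzero : ∀ v, v ≠ u0 → ¬ G.Adj u0 v → L u0 v = 0 := by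
    intro v hv hadj
    show (if u0 = v then (1:ℝ) else 0) - (if G.Adj u0 v then _ else 0) = 0
    rw [if_neg (Ne.symm hv), if_neg hadj, sub_zero]
  -- the matrix A = -L and the vector flows
  set A : Matrix V V ℝ := -L with hA
  set X : ℝ → V → ℝ := fun t => NormedSpace.exp (t • A) *ᵥ δ with hX
  set Y : ℝ → V → ℝ := fun t => NormedSpace.exp (t • A) *ᵥ (A *ᵥ δ) with hY
  set Z : ℝ → V → ℝ := fun t => NormedSpace.exp (t • A) *ᵥ (A *ᵥ (A *ᵥ δ)) with hZ
  have hXd : ∀ t v, HasDerivAt (fun s => X s v) (Y t v) t := fun t v => auxExpDeriv A δ v t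
  have hYd : ∀ t v, HasDerivAt (fun s => Y s v) (Z t v) t :=
    fun t v => auxExpDeriv A (A *ᵥ δ) v t
  have hxX : ∀ t, x t = X t := by
    intro t
    rw [hx t]
    show NormedSpace.exp ((-t) • L) *ᵥ δ = NormedSpace.exp (t • A) *ᵥ δ
    have hsm : (-t) • L = t • A := by show (-t) • L = t • (-L); rw [smul_neg, neg_smul]
    rw [hsm]
  -- values at 0
  have hexp0 : NormedSpace.exp ((0:ℝ) • A) = 1 := by rw [zero_smul, NormedSpace.exp_zero]
  have hX0 : ∀ v, X 0 v = δ v := by intro v; rw [hX]; simp only [hexp0, Matrix.one_mulVec]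
  have hY0 : ∀ v, Y 0 v = -(L v u0) := by
    intro v
    rw [hY]
    simp only [hexp0, Matrix.one_mulVec]
    simp only [hA, Matrix.neg_mulVec, Pi.neg_apply, hLdelta]
  have hZ0 : ∀ v, Z 0 v = (A *ᵥ (A *ᵥ δ)) v := by
    intro v; rw [hZ]; simp only [hexp0, Matrix.one_mulVec]
  -- positivity of the denominator
  have hDpos : ∀ t, 0 < ∑ v : V, X t v ^ 2 := by
    intro t
    have hex : ∃ v, X t v ≠ 0 := by
      by_contra hcon
      push_neg at hcon
      have h0 : NormedSpace.exp (t • A) *ᵥ δ = 0 := funext fun v => hcon v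
      have hzero : δ = 0 := by
        calc δ = (1 : Matrix V V ℝ) *ᵥ δ := (Matrix.one_mulVec δ).symm
          _ = (NormedSpace.exp (-(t • A)) * NormedSpace.exp (t • A)) *ᵥ δ := by
              rw [auxExpUnit]
          _ = NormedSpace.exp (-(t • A)) *ᵥ (NormedSpace.exp (t • A) *ᵥ δ) := by
              rw [← Matrix.mulVec_mulVec]
          _ = 0 := by rw [h0, Matrix.mulVec_zero]
      rw [hzero] at hδu0
      simpa using hδu0
    obtain ⟨v0, hv0⟩ := hex
    exact Finset.sum_pos' (fun v _ => sq_nonneg _) ⟨v0, Finset.mem_univ _, by positivity⟩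
  -- the numerator and denominator functions
  set N : ℝ → ℝ := fun t => ∑ v : V, (d u0 v) ^ 2 * X t v ^ 2 with hN
  set Dn : ℝ → ℝ := fun t => ∑ v : V, X t v ^ 2 with hDn
  set N1 : ℝ → ℝ := fun t => ∑ v : V, (d u0 v) ^ 2 * (2 * X t v * Y t v) with hN1
  set D1 : ℝ → ℝ := fun t => ∑ v : V, 2 * X t v * Y t v with hD1
  have hNd : ∀ t, HasDerivAt N (N1 t) t := by
    intro t
    have h := HasDerivAt.fun_sum (u := Finset.univ)
      (A := fun v s => (d u0 v) ^ 2 * X s v ^ 2)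
      (A' := fun v => (d u0 v) ^ 2 * ((2:ℕ) * X t v ^ 1 * Y t v))
      (fun v _ => ((hXd t v).pow 2).const_mul _)
    have heq : ∑ v : V, (d u0 v) ^ 2 * ((2:ℕ) * X t v ^ 1 * Y t v) = N1 t := by
      rw [hN1]
      exact Finset.sum_congr rfl fun v _ => by push_cast; ring
    rw [heq] at h
    exact h
  have hDd : ∀ t, HasDerivAt Dn (D1 t) t := by
    intro t
    have h := HasDerivAt.fun_sum (u := Finset.univ)
      (A := fun v s => X s v ^ 2)
      (A' := fun v => (2:ℕ) * X t v ^ 1 * Y t v)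
      (fun v _ => (hXd t v).pow 2)
    have heq : ∑ v : V, ((2:ℕ) * X t v ^ 1 * Y t v) = D1 t := by
      rw [hD1]
      exact Finset.sum_congr rfl fun v _ => by push_cast; ring
    rw [heq] at h
    exact h
  set N2 : ℝ := ∑ v : V, (d u0 v) ^ 2 * (2 * Y 0 v * Y 0 v + 2 * X 0 v * Z 0 v) with hN2
  set D2 : ℝ := ∑ v : V, (2 * Y 0 v * Y 0 v + 2 * X 0 v * Z 0 v) with hD2
  have hN1d : HasDerivAt N1 N2 0 := by
    have h := HasDerivAt.fun_sum (u := Finset.univ)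
      (A := fun v s => (d u0 v) ^ 2 * (2 * X s v * Y s v))
      (A' := fun v => (d u0 v) ^ 2 * (2 * Y 0 v * Y 0 v + 2 * X 0 v * Z 0 v))
      (fun v _ => (((hXd 0 v).const_mul 2).mul (hYd 0 v)).const_mul _)
    exact h
  have hD1d : HasDerivAt D1 D2 0 := by
    have h := HasDerivAt.fun_sum (u := Finset.univ)
      (A := fun v s => 2 * X s v * Y s v)
      (A' := fun v => 2 * Y 0 v * Y 0 v + 2 * X 0 v * Z 0 v)
      (fun v _ => ((hXd 0 v).const_mul 2).mul (hYd 0 v))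
    exact h
  -- gd equals N/Dn
  have hgdeq : gd = fun t => N t / Dn t := by
    funext t
    rw [hgd t, hxX t, hP2]
    congr 1
    simp only [dotProduct, Matrix.mulVec_diagonal]
    exact Finset.sum_congr rfl fun v _ => by ring
  have hgdd : ∀ t, HasDerivAt gd ((N1 t * Dn t - N t * D1 t) / Dn t ^ 2) t := by
    intro t
    rw [hgdeq]
    exact (hNd t).div (hDd t) (ne_of_gt (hDpos t))
  have hderivgd : deriv gd = fun t => (N1 t * Dn t - N t * D1 t) / Dn t ^ 2 :=
    funext fun t => (hgdd t).deriv
  -- values of N, N1, Dn at 0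
  have hN0 : N 0 = 0 := by
    rw [hN]
    apply Finset.sum_eq_zero
    intro v _
    by_cases hv : v = u0
    · subst hv; rw [hd00]; ring
    · rw [hX0, hδne v hv]; ring
  have hN10 : N1 0 = 0 := by
    rw [hN1]
    apply Finset.sum_eq_zero
    intro v _
    by_cases hv : v = u0
    · subst hv; rw [hd00]; ring
    · rw [hX0, hδne v hv]; ring
  have hDn0 : Dn 0 = 1 := by
    show (∑ v : V, X 0 v ^ 2) = 1
    have hvs : ∀ v : V, X 0 v ^ 2 = if v = u0 then 1 else 0 := by
      intro v
      by_cases hv : v = u0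
      · subst hv; rw [hX0, hδu0]; simp
      · rw [hX0, hδne v hv]; simp [hv]
    rw [Finset.sum_congr rfl fun v _ => hvs v]
    simp
  -- first derivative at 0 is 0
  have hderiv0 : deriv gd 0 = 0 := by
    rw [hderivgd]
    simp only [hN0, hN10]
    ring
  -- second derivative
  have hAd : HasDerivAt (fun t => N1 t * Dn t - N t * D1 t)
      ((N2 * Dn 0 + N1 0 * D1 0) - (N1 0 * D1 0 + N 0 * D2)) 0 :=
    (hN1d.mul (hDd 0)).sub ((hNd 0).mul hD1d)
  have hBd : HasDerivAt (fun t => Dn t ^ 2) ((2:ℕ) * Dn 0 ^ 1 * D1 0) 0 := (hDd 0).pow 2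
  have hG : HasDerivAt (fun t => (N1 t * Dn t - N t * D1 t) / Dn t ^ 2)
      ((((N2 * Dn 0 + N1 0 * D1 0) - (N1 0 * D1 0 + N 0 * D2)) * Dn 0 ^ 2 -
        (N1 0 * Dn 0 - N 0 * D1 0) * ((2:ℕ) * Dn 0 ^ 1 * D1 0)) / (Dn 0 ^ 2) ^ 2) 0 :=
    hAd.div hBd (by rw [hDn0]; norm_num)
  have hsecond : deriv (deriv gd) 0 = N2 := by
    rw [hderivgd, hG.deriv, hN0, hN10, hDn0]
    push_cast
    ring
  -- identify N2 with the quadratic form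
  have hdot : δ ⬝ᵥ (L *ᵥ (P2 *ᵥ (L *ᵥ δ))) = ∑ v : V, L u0 v * ((d u0 v) ^ 2 * L v u0) := by
    have hw : (Matrix.diagonal (fun v => (d u0 v) ^ 2) *ᵥ (L *ᵥ δ)) =
        fun v => (d u0 v) ^ 2 * L v u0 := funext fun v => by
      rw [Matrix.mulVec_diagonal, hLdelta]
    rw [hP2, hw, hδ, single_dotProduct, one_mul]
    show (∑ j : V, L u0 j * ((d u0 j) ^ 2 * L j u0)) = _
    rfl
  have hmain : N2 = 2 * (δ ⬝ᵥ (L *ᵥ (P2 *ᵥ (L *ᵥ δ)))) := by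
    rw [hdot, hN2, Finset.mul_sum]
    apply Finset.sum_congr rfl
    intro v _
    by_cases hv : v = u0
    · subst hv; rw [hd00]; ring
    · rw [hX0, hδne v hv, hY0, hLsymm u0 v]; ring
  -- the explicit sum over neighbors
  have hsum : ∑ v : V, L u0 v * ((d u0 v) ^ 2 * L v u0) =
      ∑ v ∈ G.neighborFinset u0, (d u0 v) ^ 2 / ((G.degree u0 : ℝ) * (G.degree v : ℝ)) := by
    rw [← Finset.sum_subset (Finset.subset_univ (G.neighborFinset u0))]
    · apply Finset.sum_congr rfl
      intro v hv
      rw [SimpleGraph.mem_neighborFinset] at hv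
      have hLvu0 : L v u0 = -(1 / (Real.sqrt (G.degree u0) * Real.sqrt (G.degree v))) := by
        rw [← hLdelta]; exact part1 v hv
      rw [hLsymm u0 v, hLvu0]
      have h1 : Real.sqrt (G.degree u0) ^ 2 = (G.degree u0 : ℝ) :=
        Real.sq_sqrt (Nat.cast_nonneg _)
      have h2 : Real.sqrt (G.degree v) ^ 2 = (G.degree v : ℝ) :=
        Real.sq_sqrt (Nat.cast_nonneg _)
      have key : (1 / (Real.sqrt (G.degree u0) * Real.sqrt (G.degree v))) ^ 2 =
          1 / ((G.degree u0 : ℝ) * (G.degree v : ℝ)) := by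
        rw [div_pow, one_pow, mul_pow, h1, h2]
      calc -(1 / (Real.sqrt (G.degree u0) * Real.sqrt (G.degree v))) *
            ((d u0 v) ^ 2 * -(1 / (Real.sqrt (G.degree u0) * Real.sqrt (G.degree v))))
          = (d u0 v) ^ 2 * (1 / (Real.sqrt (G.degree u0) * Real.sqrt (G.degree v))) ^ 2 := by
            ring
        _ = (d u0 v) ^ 2 * (1 / ((G.degree u0 : ℝ) * (G.degree v : ℝ))) := by rw [key]
        _ = (d u0 v) ^ 2 / ((G.degree u0 : ℝ) * (G.degree v : ℝ)) := by rw [mul_one_div]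
    · intro v _ hv
      rw [SimpleGraph.mem_neighborFinset] at hv
      by_cases hveq : v = u0
      · subst hveq; rw [hd00]; ring
      · rw [hLzero v hveq hv]; ring
  refine ⟨part1, hderiv0, ?_, ?_⟩
  · rw [hsecond, hmain]
  · rw [hsecond, hmain, hdot, hsum]
end
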